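/- arXiv:1209.1424 — 6 statements merged into one kernel-verified Lean document; each statement's English description precedes it below -/
import Mathlib

section
/- Let $\{Y_i\}_{i=1}^N$ be i.i.d. random variables with an eventually increasing common CDF $F$ (i.e., $F(x)<1$ for all finite $x$, $\lim_{x\to\infty}F(x)=1$, and $F$ is strictly increasing on some interval $(x_0,\infty)$). Let $G:(C,\infty)\to\mathbb{R}_+$ be strictly increasing with $\lim_{x\to\infty}G(x)(1-F(x))=1$, and let $Y^\star_N=\max_{1\le i\le N}Y_i$. Then for every $\epsilon\in(0,1)$, $\lim_{N\to\infty}\Pr\left[G^{-1}(N^{1-\epsilon})< Y^\star_N \le G^{-1}(N^{1+\epsilon})\right]=1$. -/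
open MeasureTheory ProbabilityTheory Filter Real Set Topology

/-- The maximum of `Y 1, ..., Y N`. -/
noncomputable def maxOver {Ω : Type*} (Y : ℕ → Ω → ℝ) (N : ℕ) (ω : Ω) : ℝ :=
  sSup ((fun i => Y i ω) '' Set.Icc 1 N)

lemma maxOver_le_set_eq {Ω : Type*} (Y : ℕ → Ω → ℝ) {N : ℕ} (hN : 1 ≤ N) (x : ℝ) :
    {ω | maxOver Y N ω ≤ x} = ⋂ i ∈ Finset.Icc 1 N, {ω | Y i ω ≤ x} := by
  ext ω
  simp only [Set.mem_setOf_eq, Set.mem_iInter, Finset.mem_Icc]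
  unfold maxOver
  rw [csSup_le_iff (((Set.finite_Icc 1 N).image _).bddAbove)
      ⟨Y 1 ω, Set.mem_image_of_mem _ (Set.mem_Icc.2 ⟨le_refl 1, hN⟩)⟩]
  constructor
  · intro h i hi
    exact h _ (Set.mem_image_of_mem _ (Set.mem_Icc.2 hi))
  · rintro h y ⟨i, hi, rfl⟩
    exact h i (Set.mem_Icc.1 hi)

lemma meas_maxOver_le {Ω : Type*} [MeasurableSpace Ω] (μ : Measure Ω) [IsProbabilityMeasure μ]
    (Y : ℕ → Ω → ℝ)
    (hindep : iIndepFun Y μ)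
    (F : ℝ → ℝ) (hcdf : ∀ i x, (μ {ω | Y i ω ≤ x}).toReal = F x)
    {N : ℕ} (hN : 1 ≤ N) (x : ℝ) :
    (μ {ω | maxOver Y N ω ≤ x}).toReal = F x ^ N := by
  rw [maxOver_le_set_eq Y hN x,
    hindep.meas_biInter (S := Finset.Icc 1 N) (s := fun i => {ω | Y i ω ≤ x})
      (fun i _ => ⟨Set.Iic x, measurableSet_Iic, rfl⟩),
    ENNReal.toReal_prod]
  rw [Finset.prod_congr rfl (fun i _ => hcdf i x), Finset.prod_const, Nat.card_Icc]
  simp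

lemma ginv_tendsto {C : ℝ} {G Ginv : ℝ → ℝ}
    (hGmono : StrictMonoOn G (Set.Ioi C))
    (hinv : ∀ᶠ y in atTop, Ginv y ∈ Set.Ioi C ∧ G (Ginv y) = y) :
    Tendsto Ginv atTop atTop := by
  rw [tendsto_atTop]
  intro M
  set M' := max M (C + 1) with hM'
  have hM'C : M' ∈ Set.Ioi C := lt_of_lt_of_le (lt_add_one C) (le_max_right _ _)
  filter_upwards [hinv, eventually_ge_atTop (G M' + 1)] with y hy hy3
  obtain ⟨hy1, hy2⟩ := hy
  by_contra h
  push_neg at h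
  have hlt : Ginv y < M' := lt_of_lt_of_le h (le_max_left _ _)
  have := hGmono hy1 hM'C hlt
  rw [hy2] at this
  linarith

/-- Concentration of the extreme order statistic: for i.i.d. `Y i` with eventually
increasing CDF `F` whose tail is characterized by `G`, the maximum lies in
`(G⁻¹(N^(1-ε)), G⁻¹(N^(1+ε))]` with probability tending to one. -/
theorem extreme_order_statistic_concentration
    {Ω : Type*} [MeasurableSpace Ω] (μ : Measure Ω) [IsProbabilityMeasure μ]
    (Y : ℕ → Ω → ℝ) (hmeas : ∀ i, Measurable (Y i))
    (hindep : iIndepFun Y μ)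
    (F : ℝ → ℝ) (hcdf : ∀ i x, (μ {ω | Y i ω ≤ x}).toReal = F x)
    (hFlt1 : ∀ x, F x < 1)
    (hFto1 : Tendsto F atTop (𝓝 1))
    (x0 : ℝ) (hFmono : StrictMonoOn F (Set.Ioi x0))
    (C : ℝ) (G Ginv : ℝ → ℝ)
    (hGmono : StrictMonoOn G (Set.Ioi C))
    (hGpos : ∀ x ∈ Set.Ioi C, 0 < G x)
    (htail : Tendsto (fun x => G x * (1 - F x)) atTop (𝓝 1))
    (hinv : ∀ᶠ y in atTop, Ginv y ∈ Set.Ioi C ∧ G (Ginv y) = y)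
    (ε : ℝ) (hε : ε ∈ Set.Ioo (0 : ℝ) 1) :
    Tendsto (fun N : ℕ =>
      (μ {ω | Ginv ((N : ℝ) ^ ((1 : ℝ) - ε)) < maxOver Y N ω ∧
              maxOver Y N ω ≤ Ginv ((N : ℝ) ^ ((1 : ℝ) + ε))}).toReal)
      atTop (𝓝 1) := by
  obtain ⟨hε0, hε1⟩ := hε
  set a : ℕ → ℝ := fun N => Ginv ((N:ℝ) ^ ((1:ℝ) - ε)) with ha
  set b : ℕ → ℝ := fun N => Ginv ((N:ℝ) ^ ((1:ℝ) + ε)) with hb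
  have hnat : Tendsto (fun N : ℕ => (N:ℝ)) atTop atTop := tendsto_natCast_atTop_atTop
  have hta : Tendsto (fun N : ℕ => (N:ℝ) ^ ((1:ℝ) - ε)) atTop atTop :=
    (tendsto_rpow_atTop (by linarith)).comp hnat
  have htb : Tendsto (fun N : ℕ => (N:ℝ) ^ ((1:ℝ) + ε)) atTop atTop :=
    (tendsto_rpow_atTop (by linarith)).comp hnat
  have hGi := ginv_tendsto hGmono hinv
  have hainf : Tendsto a atTop atTop := hGi.comp hta
  have hbinf : Tendsto b atTop atTop := hGi.comp htb
  have hinva : ∀ᶠ N : ℕ in atTop, a N ∈ Set.Ioi C ∧ G (a N) = (N:ℝ) ^ ((1:ℝ) - ε) :=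
    hta.eventually hinv
  have hinvb : ∀ᶠ N : ℕ in atTop, b N ∈ Set.Ioi C ∧ G (b N) = (N:ℝ) ^ ((1:ℝ) + ε) :=
    htb.eventually hinv
  have hF0 : ∀ x, 0 ≤ F x := fun x => (hcdf 0 x) ▸ ENNReal.toReal_nonneg
  -- upper endpoint: F (b N) ^ N → 1
  have hcb : Tendsto (fun N : ℕ => G (b N) * (1 - F (b N))) atTop (𝓝 1) := htail.comp hbinf
  have hNε : Tendsto (fun N : ℕ => (N:ℝ) ^ (-ε)) atTop (𝓝 0) :=
    (tendsto_rpow_neg_atTop hε0).comp hnat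
  have hNub : Tendsto (fun N : ℕ => (N:ℝ) * (1 - F (b N))) atTop (𝓝 0) := by
    have heq : (fun N : ℕ => (N:ℝ) * (1 - F (b N))) =ᶠ[atTop]
        fun N => (G (b N) * (1 - F (b N))) * (N:ℝ) ^ (-ε) := by
      filter_upwards [hinvb, eventually_ge_atTop 1] with N hN hN1
      obtain ⟨_, hGb⟩ := hN
      have hN0 : (0:ℝ) < N := by exact_mod_cast hN1
      have h1 : (N:ℝ)^((1:ℝ)+ε) * (N:ℝ)^(-ε) = (N:ℝ) := by
        rw [← Real.rpow_add hN0]; norm_num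
      rw [hGb]
      calc (N:ℝ) * (1 - F (b N)) = ((N:ℝ)^((1:ℝ)+ε) * (N:ℝ)^(-ε)) * (1 - F (b N)) := by
            rw [h1]
        _ = (N:ℝ)^((1:ℝ)+ε) * (1 - F (b N)) * (N:ℝ)^(-ε) := by ring
    exact Tendsto.congr' heq.symm (by simpa using hcb.mul hNε)
  have hFbN : Tendsto (fun N : ℕ => F (b N) ^ N) atTop (𝓝 1) := by
    apply tendsto_of_tendsto_of_tendsto_of_le_of_le'
      (g := fun N : ℕ => 1 - (N:ℝ) * (1 - F (b N))) (h := fun _ : ℕ => (1:ℝ))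
    · simpa using (tendsto_const_nhds.sub hNub)
    · exact tendsto_const_nhds
    · filter_upwards with N
      have hB := one_add_mul_le_pow (a := F (b N) - 1) (by nlinarith [hF0 (b N)]) N
      calc 1 - (N:ℝ) * (1 - F (b N)) = 1 + (N:ℝ) * (F (b N) - 1) := by ring
        _ ≤ (1 + (F (b N) - 1)) ^ N := hB
        _ = F (b N) ^ N := by ring_nf
    · filter_upwards with N
      exact pow_le_one₀ (hF0 _) (hFlt1 _).le
  -- lower endpoint: F (a N) ^ N → 0
  have hca : Tendsto (fun N : ℕ => G (a N) * (1 - F (a N))) atTop (𝓝 1) := htail.comp hainf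
  have hNε' : Tendsto (fun N : ℕ => (N:ℝ) ^ ε) atTop atTop :=
    (tendsto_rpow_atTop hε0).comp hnat
  have hNua : Tendsto (fun N : ℕ => (N:ℝ) * (1 - F (a N))) atTop atTop := by
    have heq : (fun N : ℕ => (N:ℝ) * (1 - F (a N))) =ᶠ[atTop]
        fun N => (G (a N) * (1 - F (a N))) * (N:ℝ) ^ ε := by
      filter_upwards [hinva, eventually_ge_atTop 1] with N hN hN1
      obtain ⟨_, hGa⟩ := hN
      have hN0 : (0:ℝ) < N := by exact_mod_cast hN1
      have h1 : (N:ℝ)^((1:ℝ)-ε) * (N:ℝ)^ε = (N:ℝ) := by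
        rw [← Real.rpow_add hN0]; norm_num
      rw [hGa]
      calc (N:ℝ) * (1 - F (a N)) = ((N:ℝ)^((1:ℝ)-ε) * (N:ℝ)^ε) * (1 - F (a N)) := by
            rw [h1]
        _ = (N:ℝ)^((1:ℝ)-ε) * (1 - F (a N)) * (N:ℝ)^ε := by ring
    exact Tendsto.congr' heq.symm (hca.pos_mul_atTop one_pos hNε')
  have hFaN : Tendsto (fun N : ℕ => F (a N) ^ N) atTop (𝓝 0) := by
    apply tendsto_of_tendsto_of_tendsto_of_le_of_le'
      (g := fun _ : ℕ => (0:ℝ))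
      (h := fun N : ℕ => Real.exp (-((N:ℝ) * (1 - F (a N)))))
    · exact tendsto_const_nhds
    · exact Real.tendsto_exp_neg_atTop_nhds_zero.comp hNua
    · filter_upwards with N; exact pow_nonneg (hF0 _) N
    · filter_upwards with N
      have h1 : F (a N) ≤ Real.exp (-(1 - F (a N))) := by
        have := Real.add_one_le_exp (-(1 - F (a N)))
        linarith
      calc F (a N) ^ N ≤ Real.exp (-(1 - F (a N))) ^ N := by
            exact pow_le_pow_left₀ (hF0 _) h1 N
        _ = Real.exp (-((N:ℝ) * (1 - F (a N)))) := by
            rw [← Real.exp_nat_mul]; ring_nf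
  -- combine
  have key : ∀ᶠ N : ℕ in atTop,
      (μ {ω | a N < maxOver Y N ω ∧ maxOver Y N ω ≤ b N}).toReal
        = F (b N) ^ N - F (a N) ^ N := by
    filter_upwards [hinva, hinvb, eventually_ge_atTop 2] with N hNa hNb hN2
    obtain ⟨haC, hGa⟩ := hNa
    obtain ⟨hbC, hGb⟩ := hNb
    have hN1 : 1 ≤ N := le_trans one_le_two hN2
    have hab : a N < b N := by
      have h1 : (1:ℝ) < N := by exact_mod_cast hN2
      have hlt : (N:ℝ)^((1:ℝ)-ε) < (N:ℝ)^((1:ℝ)+ε) :=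
        (Real.rpow_lt_rpow_left_iff h1).2 (by linarith)
      have hGlt : G (a N) < G (b N) := by rw [hGa, hGb]; exact hlt
      exact (hGmono.lt_iff_lt haC hbC).1 hGlt
    have hAB : {ω | maxOver Y N ω ≤ a N} ⊆ {ω | maxOver Y N ω ≤ b N} :=
      fun ω h => le_trans h hab.le
    have hmeasA : MeasurableSet {ω | maxOver Y N ω ≤ a N} := by
      rw [maxOver_le_set_eq Y hN1]
      exact Finset.measurableSet_biInter _ (fun i _ => (hmeas i) measurableSet_Iic)
    have hsplit : {ω | a N < maxOver Y N ω ∧ maxOver Y N ω ≤ b N}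
        = {ω | maxOver Y N ω ≤ b N} \ {ω | maxOver Y N ω ≤ a N} := by
      ext ω; simp only [Set.mem_setOf_eq, Set.mem_diff, not_le]; tauto
    rw [hsplit, measure_diff hAB hmeasA.nullMeasurableSet (measure_ne_top μ _),
      ENNReal.toReal_sub_of_le (measure_mono hAB) (measure_ne_top μ _),
      meas_maxOver_le μ Y hindep F hcdf hN1, meas_maxOver_le μ Y hindep F hcdf hN1]
  have final : Tendsto (fun N : ℕ => F (b N) ^ N - F (a N) ^ N) atTop (𝓝 1) := by
    simpa using hFbN.sub hFaN
  exact Filter.Tendsto.congr' (Filter.EventuallyEq.symm key) final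
end

section
/- Let $\{Y_i\}_{i=1}^N$ be i.i.d. with eventually increasing CDF $F$ whose tail is characterized by $G$ (i.e., $\lim_{x\to\infty}G(x)(1-F(x))=1$), and let $Y^\star_N=\max_i Y_i$. Then for every $\epsilon\in(0,1)$ and all sufficiently large $N$, $\Pr[Y^\star_N \le G^{-1}(N^{1+\epsilon})] = 1-\Theta(N^{-\epsilon})$ and $\Pr[Y^\star_N \le G^{-1}(N^{1-\epsilon})] = e^{-\Theta(N^{\epsilon})}$. -/
open MeasureTheory ProbabilityTheory Filter Real Set Topology

lemma maxCdf {Ω : Type*} [MeasurableSpace Ω] (μ : Measure Ω) [IsProbabilityMeasure μ]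
    (Y : ℕ → Ω → ℝ)
    (hindep : iIndepFun Y μ)
    (F : ℝ → ℝ) (hcdf : ∀ i x, (μ {ω | Y i ω ≤ x}).toReal = F x)
    (N : ℕ) (hN : 1 ≤ N) (t : ℝ) :
    (μ {ω | maxOver Y N ω ≤ t}).toReal = F t ^ N := by
  have hset : {ω | maxOver Y N ω ≤ t} = ⋂ i ∈ Finset.Icc 1 N, {ω | Y i ω ≤ t} := by
    ext ω
    simp only [Set.mem_setOf_eq, Set.mem_iInter, Finset.mem_Icc, maxOver]
    rw [csSup_le_iff (Set.Finite.bddAbove ((Set.finite_Icc 1 N).image _))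
      (Set.Nonempty.image _ ⟨1, by simp [hN]⟩)]
    constructor
    · intro h i hi
      exact h _ ⟨i, by simpa using hi, rfl⟩
    · rintro h y ⟨i, hi, rfl⟩
      exact h i (by simpa using hi)
  have hmeasbi := hindep.meas_biInter (S := Finset.Icc 1 N)
    (s := fun i => {ω | Y i ω ≤ t}) (fun i _ => ⟨Set.Iic t, measurableSet_Iic, rfl⟩)
  rw [hset, hmeasbi, ENNReal.toReal_prod]
  rw [Finset.prod_congr rfl (fun i _ => hcdf i t), Finset.prod_const, Nat.card_Icc]
  norm_num

lemma ginvTendsto (C : ℝ) (G Ginv : ℝ → ℝ) (hGmono : StrictMonoOn G (Set.Ioi C))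
    (hinv : ∀ᶠ y in atTop, Ginv y ∈ Set.Ioi C ∧ G (Ginv y) = y) :
    Tendsto Ginv atTop atTop := by
  rw [tendsto_atTop]
  intro M
  filter_upwards [hinv, eventually_gt_atTop (G (max M (C + 1)))] with y hy hgt
  by_contra h
  push_neg at h
  have hM : max M (C+1) ∈ Set.Ioi C := by
    simp only [Set.mem_Ioi]
    exact lt_of_lt_of_le (by linarith) (le_max_right _ _)
  have hle : Ginv y < max M (C+1) := lt_of_lt_of_le h (le_max_left _ _)
  have := hGmono hy.1 hM hle
  rw [hy.2] at this
  exact absurd hgt (by linarith)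

lemma tailBound (F : ℝ → ℝ) (C : ℝ) (G Ginv : ℝ → ℝ)
    (hGmono : StrictMonoOn G (Set.Ioi C))
    (htail : Tendsto (fun x => G x * (1 - F x)) atTop (𝓝 1))
    (hinv : ∀ᶠ y in atTop, Ginv y ∈ Set.Ioi C ∧ G (Ginv y) = y)
    (r : ℝ) (hr : 0 < r) :
    ∀ᶠ N : ℕ in atTop,
      (1/2) * (((N:ℝ)^r)⁻¹) ≤ 1 - F (Ginv ((N:ℝ)^r)) ∧
      1 - F (Ginv ((N:ℝ)^r)) ≤ 2 * (((N:ℝ)^r)⁻¹) := by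
  have hGinv := ginvTendsto C G Ginv hGmono hinv
  have hrpow : Tendsto (fun N : ℕ => (N:ℝ)^r) atTop atTop :=
    (tendsto_rpow_atTop hr).comp tendsto_natCast_atTop_atTop
  have h1 : Tendsto (fun N : ℕ => G (Ginv ((N:ℝ)^r)) * (1 - F (Ginv ((N:ℝ)^r)))) atTop (𝓝 1) :=
    htail.comp (hGinv.comp hrpow)
  have h2 : ∀ᶠ N : ℕ in atTop, G (Ginv ((N:ℝ)^r)) = (N:ℝ)^r :=
    (hrpow.eventually hinv).mono fun N h => h.2
  have h1' : Tendsto (fun N : ℕ => (N:ℝ)^r * (1 - F (Ginv ((N:ℝ)^r)))) atTop (𝓝 1) := by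
    apply h1.congr'
    filter_upwards [h2] with N h
    rw [h]
  have hmem : Set.Ioo (1/2 : ℝ) (3/2) ∈ 𝓝 (1:ℝ) := Ioo_mem_nhds (by norm_num) (by norm_num)
  filter_upwards [h1'.eventually hmem, eventually_ge_atTop 1] with N hN hN1
  have hNpos : (0:ℝ) < (N:ℝ)^r := rpow_pos_of_pos (by exact_mod_cast hN1) r
  obtain ⟨hlo, hhi⟩ := hN
  have hipos : (0:ℝ) < ((N:ℝ)^r)⁻¹ := inv_pos.2 hNpos
  have hcancel : (N:ℝ)^r * ((N:ℝ)^r)⁻¹ = 1 := mul_inv_cancel₀ hNpos.ne'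
  constructor
  · nlinarith [mul_le_mul_of_nonneg_right hlo.le hipos.le]
  · nlinarith [mul_le_mul_of_nonneg_right hhi.le hipos.le]

lemma pow_bounds_aux (a : ℝ) (N : ℕ) (ha0 : 0 ≤ a) (ha1 : a ≤ 1) (hNa : (N:ℝ) * a ≤ 1/2) :
    (1/2) * ((N:ℝ) * a) ≤ 1 - (1-a)^N ∧ 1 - (1-a)^N ≤ (N:ℝ) * a := by
  have hx0 : (0:ℝ) ≤ 1 - a := by linarith
  have hx1 : (1:ℝ) - a ≤ 1 := by linarith
  have hbern : 1 - (N:ℝ) * a ≤ (1-a)^N := by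
    have := one_add_mul_le_pow (show (-2:ℝ) ≤ -a by linarith) N
    calc 1 - (N:ℝ) * a = 1 + (N:ℝ) * (-a) := by ring
    _ ≤ (1 + -a)^N := this
    _ = (1-a)^N := by ring_nf
  refine ⟨?_, by linarith⟩
  have hgeom : 1 - (1-a)^N = a * ∑ i ∈ Finset.range N, (1-a)^i := by
    linear_combination geom_sum_mul (1-a) N
  have hterm : ∀ i ∈ Finset.range N, (1:ℝ)/2 ≤ (1-a)^i := by
    intro i hi
    calc (1:ℝ)/2 ≤ 1 - (N:ℝ)*a := by linarith
    _ ≤ (1-a)^N := hbern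
    _ ≤ (1-a)^i := pow_le_pow_of_le_one hx0 hx1 (Finset.mem_range.1 hi).le
  have hsum : (N:ℝ) * (1/2) ≤ ∑ i ∈ Finset.range N, (1-a)^i := by
    calc (N:ℝ) * (1/2) = ∑ _i ∈ Finset.range N, (1:ℝ)/2 := by
          rw [Finset.sum_const, Finset.card_range]; ring
    _ ≤ _ := Finset.sum_le_sum hterm
  rw [hgeom]
  calc (1/2) * ((N:ℝ) * a) = a * ((N:ℝ) * (1/2)) := by ring
  _ ≤ a * ∑ i ∈ Finset.range N, (1-a)^i := mul_le_mul_of_nonneg_left hsum ha0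

lemma exp_bounds_aux (b : ℝ) (hb0 : 0 ≤ b) (hb2 : b ≤ 1/2) :
    Real.exp (-(2*b)) ≤ 1 - b ∧ 1 - b ≤ Real.exp (-b) := by
  constructor
  · have h := Real.add_one_le_exp (2*b)
    have hE : 0 < Real.exp (2*b) := Real.exp_pos _
    rw [Real.exp_neg, inv_le_iff_one_le_mul₀ hE]
    nlinarith
  · have := Real.add_one_le_exp (-b)
    linarith

lemma rpow_inv_mul_aux (x : ℝ) (hx : 0 < x) (r : ℝ) : x * (x^r)⁻¹ = x^((1:ℝ)-r) := by
  have h : x ^ ((1:ℝ)-r) * x ^ r = x := by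
    rw [← Real.rpow_add hx]; norm_num
  calc x * (x^r)⁻¹ = (x^((1:ℝ)-r) * x^r) * (x^r)⁻¹ := by rw [h]
  _ = x^((1:ℝ)-r) := mul_inv_cancel_right₀ (Real.rpow_pos_of_pos hx r).ne' _

/-- Quantitative tail bounds for the extreme order statistic:
`Pr[Y*_N ≤ G⁻¹(N^(1+ε))] = 1 - Θ(N^(-ε))` and
`Pr[Y*_N ≤ G⁻¹(N^(1-ε))] = e^(-Θ(N^ε))` for large `N`. -/
theorem extreme_order_statistic_theta_bounds
    {Ω : Type*} [MeasurableSpace Ω] (μ : Measure Ω) [IsProbabilityMeasure μ]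
    (Y : ℕ → Ω → ℝ) (hmeas : ∀ i, Measurable (Y i))
    (hindep : iIndepFun Y μ)
    (F : ℝ → ℝ) (hcdf : ∀ i x, (μ {ω | Y i ω ≤ x}).toReal = F x)
    (hFlt1 : ∀ x, F x < 1)
    (hFto1 : Tendsto F atTop (𝓝 1))
    (x0 : ℝ) (hFmono : StrictMonoOn F (Set.Ioi x0))
    (C : ℝ) (G Ginv : ℝ → ℝ)
    (hGmono : StrictMonoOn G (Set.Ioi C))
    (hGpos : ∀ x ∈ Set.Ioi C, 0 < G x)
    (htail : Tendsto (fun x => G x * (1 - F x)) atTop (𝓝 1))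
    (hinv : ∀ᶠ y in atTop, Ginv y ∈ Set.Ioi C ∧ G (Ginv y) = y)
    (ε : ℝ) (hε : ε ∈ Set.Ioo (0 : ℝ) 1) :
    (∃ c₁ c₂ : ℝ, 0 < c₁ ∧ 0 < c₂ ∧ ∀ᶠ N : ℕ in atTop,
      c₁ * (N : ℝ) ^ (-ε) ≤
        1 - (μ {ω | maxOver Y N ω ≤ Ginv ((N : ℝ) ^ ((1 : ℝ) + ε))}).toReal ∧
      1 - (μ {ω | maxOver Y N ω ≤ Ginv ((N : ℝ) ^ ((1 : ℝ) + ε))}).toReal ≤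
        c₂ * (N : ℝ) ^ (-ε)) ∧
    (∃ d₁ d₂ : ℝ, 0 < d₁ ∧ 0 < d₂ ∧ ∀ᶠ N : ℕ in atTop,
      Real.exp (-(d₂ * (N : ℝ) ^ ε)) ≤
        (μ {ω | maxOver Y N ω ≤ Ginv ((N : ℝ) ^ ((1 : ℝ) - ε))}).toReal ∧
      (μ {ω | maxOver Y N ω ≤ Ginv ((N : ℝ) ^ ((1 : ℝ) - ε))}).toReal ≤
        Real.exp (-(d₁ * (N : ℝ) ^ ε))) := by
  obtain ⟨hε0, hε1⟩ := hε
  have hF0 : ∀ x, 0 ≤ F x := fun x => (hcdf 0 x) ▸ ENNReal.toReal_nonneg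
  constructor
  · refine ⟨1/4, 2, by norm_num, by norm_num, ?_⟩
    have hT := tailBound F C G Ginv hGmono htail hinv ((1:ℝ)+ε) (by linarith)
    have hs : ∀ᶠ N : ℕ in atTop, (N:ℝ)^(-ε) < 1/4 :=
      ((tendsto_rpow_neg_atTop hε0).comp tendsto_natCast_atTop_atTop).eventually_lt_const
        (by norm_num)
    filter_upwards [hT, hs, eventually_ge_atTop 1] with N ha hsm hN1
    have hNpos : (0:ℝ) < N := by exact_mod_cast hN1
    set a := 1 - F (Ginv ((N:ℝ)^((1:ℝ)+ε))) with hadef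
    obtain ⟨halo, hahi⟩ := ha
    have halg : (N:ℝ) * (((N:ℝ)^((1:ℝ)+ε))⁻¹) = (N:ℝ)^(-ε) := by
      rw [rpow_inv_mul_aux _ hNpos]; norm_num
    have ha0 : 0 ≤ a := by
      have := hFlt1 (Ginv ((N:ℝ)^((1:ℝ)+ε))); rw [hadef]; linarith
    have ha1 : a ≤ 1 := by
      have := hF0 (Ginv ((N:ℝ)^((1:ℝ)+ε))); rw [hadef]; linarith
    have hNa_up : (N:ℝ) * a ≤ 2 * (N:ℝ)^(-ε) := by
      calc (N:ℝ)*a ≤ (N:ℝ) * (2 * (((N:ℝ)^((1:ℝ)+ε))⁻¹)) :=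
            mul_le_mul_of_nonneg_left hahi hNpos.le
      _ = 2 * ((N:ℝ) * (((N:ℝ)^((1:ℝ)+ε))⁻¹)) := by ring
      _ = 2 * (N:ℝ)^(-ε) := by rw [halg]
    have hNa_lo : (1/2) * (N:ℝ)^(-ε) ≤ (N:ℝ) * a := by
      calc (1/2) * (N:ℝ)^(-ε) = (N:ℝ) * ((1/2) * (((N:ℝ)^((1:ℝ)+ε))⁻¹)) := by
            rw [← halg]; ring
      _ ≤ (N:ℝ) * a := mul_le_mul_of_nonneg_left halo hNpos.le
    have hsm' : (2:ℝ) * (N:ℝ)^(-ε) ≤ 1/2 := by linarith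
    have hNa_half : (N:ℝ) * a ≤ 1/2 := le_trans hNa_up hsm'
    obtain ⟨hlow, hup⟩ := pow_bounds_aux a N ha0 ha1 hNa_half
    rw [maxCdf μ Y hindep F hcdf N hN1 (Ginv ((N:ℝ)^((1:ℝ)+ε))),
      show F (Ginv ((N:ℝ)^((1:ℝ)+ε))) = 1 - a from by rw [hadef]; ring]
    constructor
    · linarith
    · linarith
  · refine ⟨1/2, 4, by norm_num, by norm_num, ?_⟩
    have hT := tailBound F C G Ginv hGmono htail hinv ((1:ℝ)-ε) (by linarith)
    have hs : ∀ᶠ N : ℕ in atTop, (((N:ℝ)^((1:ℝ)-ε))⁻¹) < 1/4 :=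
      (((tendsto_rpow_atTop (by linarith : (0:ℝ) < 1 - ε)).comp
        tendsto_natCast_atTop_atTop).inv_tendsto_atTop).eventually_lt_const (by norm_num)
    filter_upwards [hT, hs, eventually_ge_atTop 1] with N hb hsm hN1
    have hNpos : (0:ℝ) < N := by exact_mod_cast hN1
    set b := 1 - F (Ginv ((N:ℝ)^((1:ℝ)-ε))) with hbdef
    obtain ⟨hblo, hbhi⟩ := hb
    have halg : (N:ℝ) * (((N:ℝ)^((1:ℝ)-ε))⁻¹) = (N:ℝ)^ε := by
      rw [rpow_inv_mul_aux _ hNpos]; norm_num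
    have hb0 : 0 ≤ b := by
      have := hFlt1 (Ginv ((N:ℝ)^((1:ℝ)-ε))); rw [hbdef]; linarith
    have hb2 : b ≤ 1/2 := by linarith
    have hNb_up : (N:ℝ) * b ≤ 2 * (N:ℝ)^ε := by
      calc (N:ℝ)*b ≤ (N:ℝ) * (2 * (((N:ℝ)^((1:ℝ)-ε))⁻¹)) :=
            mul_le_mul_of_nonneg_left hbhi hNpos.le
      _ = 2 * ((N:ℝ) * (((N:ℝ)^((1:ℝ)-ε))⁻¹)) := by ring
      _ = 2 * (N:ℝ)^ε := by rw [halg]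
    have hNb_lo : (1/2) * (N:ℝ)^ε ≤ (N:ℝ) * b := by
      calc (1/2) * (N:ℝ)^ε = (N:ℝ) * ((1/2) * (((N:ℝ)^((1:ℝ)-ε))⁻¹)) := by
            rw [← halg]; ring
      _ ≤ (N:ℝ) * b := mul_le_mul_of_nonneg_left hblo hNpos.le
    obtain ⟨helow, heup⟩ := exp_bounds_aux b hb0 hb2
    rw [maxCdf μ Y hindep F hcdf N hN1 (Ginv ((N:ℝ)^((1:ℝ)-ε))),
      show F (Ginv ((N:ℝ)^((1:ℝ)-ε))) = 1 - b from by rw [hbdef]; ring]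
    constructor
    · calc Real.exp (-(4 * (N:ℝ)^ε)) ≤ Real.exp ((N:ℝ) * -(2*b)) :=
            Real.exp_le_exp.2 (by nlinarith)
      _ = Real.exp (-(2*b)) ^ N := Real.exp_nat_mul _ N
      _ ≤ (1-b)^N := pow_le_pow_left₀ (Real.exp_pos _).le helow N
    · calc (1-b)^N ≤ Real.exp (-b) ^ N := pow_le_pow_left₀ (by linarith) heup N
      _ = Real.exp ((N:ℝ) * -b) := (Real.exp_nat_mul _ N).symm
      _ ≤ Real.exp (-(1/2 * (N:ℝ)^ε)) := Real.exp_le_exp.2 (by linarith)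
end

section
/- Let $h_1,\dots,h_N$ be i.i.d. nonnegative random variables whose common CDF $F_h$ satisfies $\lim_{x\to\infty}\frac{1-F_h(x)}{\alpha x^{l}e^{-\beta x^{n}+H(x)}}=1$ for constants $\alpha,\beta,n>0$, $l\in\mathbb{R}$, and a slowly varying function $H$ with $H(x)=o(x^n)$. Let $h^\star_N=\max_i h_i$. Then $\frac{h^\star_N}{\left(\frac{1}{\beta}\log(\alpha N)\right)^{1/n}}\to 1$ in probability as $N\to\infty$. -/
open MeasureTheory ProbabilityTheory Filter Real Set Topology


noncomputable def cseq (α β n : ℝ) (N : ℕ) : ℝ := (Real.log (α * N) / β) ^ (1 / n)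

noncomputable def Eseq (α β n l s : ℝ) (H : ℝ → ℝ) (N : ℕ) : ℝ :=
  (1 - s ^ n) * (Real.log α + Real.log N) + l * Real.log (s * cseq α β n N)
    + H (s * cseq α β n N)

lemma alphaN_tendsto {α : ℝ} (hα : 0 < α) :
    Tendsto (fun N : ℕ => α * (N : ℝ)) atTop atTop :=
  (tendsto_natCast_atTop_atTop).const_mul_atTop hα

lemma logalphaN_tendsto {α : ℝ} (hα : 0 < α) :
    Tendsto (fun N : ℕ => Real.log (α * N)) atTop atTop :=
  Real.tendsto_log_atTop.comp (alphaN_tendsto hα)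

lemma logN_tendsto : Tendsto (fun N : ℕ => Real.log N) atTop atTop :=
  Real.tendsto_log_atTop.comp tendsto_natCast_atTop_atTop

lemma cseq_tendsto {α β n : ℝ} (hα : 0 < α) (hβ : 0 < β) (hn : 0 < n) :
    Tendsto (cseq α β n) atTop atTop :=
  (tendsto_rpow_atTop (by positivity : (0:ℝ) < 1/n)).comp
    ((logalphaN_tendsto hα).atTop_div_const hβ)

lemma L_div_logN {α : ℝ} (hα : 0 < α) :
    Tendsto (fun N : ℕ => Real.log (α * N) / Real.log N) atTop (𝓝 1) := by
  have h0 : Tendsto (fun N : ℕ => Real.log α / Real.log N + 1) atTop (𝓝 1) := by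
    have := (tendsto_const_nhds (x := Real.log α)).div_atTop logN_tendsto
    simpa using this.add (tendsto_const_nhds (x := (1:ℝ)))
  refine h0.congr' ?_
  filter_upwards [eventually_gt_atTop 0, logN_tendsto.eventually_gt_atTop 0] with N hN hlog
  have hN0 : ((N : ℝ)) ≠ 0 := Nat.cast_ne_zero.mpr hN.ne'
  rw [Real.log_mul hα.ne' hN0, add_div, div_self hlog.ne']

lemma logL_div_logN {α : ℝ} (hα : 0 < α) :
    Tendsto (fun N : ℕ => Real.log (Real.log (α * N)) / Real.log N) atTop (𝓝 0) := by
  have h3 : Tendsto (fun N : ℕ => Real.log (Real.log (α * N)) / Real.log (α * N))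
      atTop (𝓝 0) :=
    (Real.isLittleO_log_id_atTop.tendsto_div_nhds_zero).comp (logalphaN_tendsto hα)
  have h4 := h3.mul (L_div_logN hα)
  rw [zero_mul] at h4
  refine h4.congr' ?_
  filter_upwards [(logalphaN_tendsto hα).eventually_gt_atTop 0] with N hL
  field_simp

lemma cseq_rpow_n {α β n : ℝ} (hβ : 0 < β) (hn : 0 < n) {N : ℕ}
    (hL : 0 < Real.log (α * N)) :
    (cseq α β n N) ^ n = Real.log (α * N) / β := by
  rw [cseq, ← Real.rpow_mul (by positivity), one_div_mul_cancel hn.ne', Real.rpow_one]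

lemma ND_eq_exp {α β n l s : ℝ} {H : ℝ → ℝ} (hα : 0 < α) (hβ : 0 < β) (hn : 0 < n)
    (hs : 0 < s) {N : ℕ} (hN : 1 ≤ N) (hL : 0 < Real.log (α * N)) :
    (N : ℝ) * (α * (s * cseq α β n N) ^ l *
      Real.exp (-β * (s * cseq α β n N) ^ n + H (s * cseq α β n N)))
      = Real.exp (Eseq α β n l s H N) := by
  have hN0 : (0:ℝ) < N := by exact_mod_cast hN
  have hc : 0 < cseq α β n N := Real.rpow_pos_of_pos (by positivity) _
  have hsc : 0 < s * cseq α β n N := by positivity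
  have hβcn : β * (s * cseq α β n N) ^ n = s ^ n * (Real.log α + Real.log N) := by
    rw [Real.mul_rpow hs.le hc.le, cseq_rpow_n hβ hn hL,
      Real.log_mul hα.ne' (by positivity : ((N:ℝ)) ≠ 0)]
    field_simp
  have hpos : 0 < (N : ℝ) * (α * (s * cseq α β n N) ^ l *
      Real.exp (-β * (s * cseq α β n N) ^ n + H (s * cseq α β n N))) := by positivity
  rw [← Real.exp_log hpos]
  congr 1
  rw [Real.log_mul (by positivity) (by positivity),
    Real.log_mul (by positivity) (by positivity),
    Real.log_mul hα.ne' (by positivity : ((s * cseq α β n N) ^ l) ≠ 0),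
    Real.log_exp, Real.log_rpow hsc, neg_mul, hβcn, Eseq]
  ring

lemma Eseq_div_logN {α β n l s : ℝ} {H : ℝ → ℝ} (hα : 0 < α) (hβ : 0 < β)
    (hn : 0 < n) (hs : 0 < s) (hHo : H =o[atTop] fun x => x ^ n) :
    Tendsto (fun N : ℕ => Eseq α β n l s H N / Real.log N) atTop (𝓝 (1 - s ^ n)) := by
  have hx : Tendsto (fun N : ℕ => s * cseq α β n N) atTop atTop :=
    (cseq_tendsto hα hβ hn).const_mul_atTop hs
  -- first summand
  have t1 : Tendsto (fun N : ℕ => (1 - s ^ n) * ((Real.log α + Real.log N) / Real.log N))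
      atTop (𝓝 ((1 - s ^ n) * 1)) := by
    refine Tendsto.const_mul _ ?_
    have h0 : Tendsto (fun N : ℕ => Real.log α / Real.log N + 1) atTop (𝓝 1) := by
      have := (tendsto_const_nhds (x := Real.log α)).div_atTop logN_tendsto
      simpa using this.add (tendsto_const_nhds (x := (1:ℝ)))
    refine h0.congr' ?_
    filter_upwards [logN_tendsto.eventually_gt_atTop 0] with N hlog
    rw [add_div, div_self hlog.ne']
  -- second summand
  have t2 : Tendsto (fun N : ℕ => l * (Real.log (s * cseq α β n N) / Real.log N))
      atTop (𝓝 (l * 0)) := by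
    refine Tendsto.const_mul _ ?_
    have h0 : Tendsto (fun N : ℕ =>
        (Real.log s - (1/n) * Real.log β) / Real.log N
          + (1/n) * (Real.log (Real.log (α * N)) / Real.log N)) atTop (𝓝 0) := by
      have ha := (tendsto_const_nhds (x := Real.log s - (1/n) * Real.log β)).div_atTop
        logN_tendsto
      have hb := (logL_div_logN hα).const_mul (1/n)
      rw [mul_zero] at hb
      simpa using ha.add hb
    refine h0.congr' ?_
    filter_upwards [(logalphaN_tendsto hα).eventually_gt_atTop 0] with N hL
    have hc : 0 < cseq α β n N := Real.rpow_pos_of_pos (by positivity) _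
    rw [Real.log_mul hs.ne' hc.ne', cseq, Real.log_rpow (by positivity),
      Real.log_div hL.ne' hβ.ne']
    ring
  -- third summand
  have t3 : Tendsto (fun N : ℕ => H (s * cseq α β n N) / Real.log N) atTop (𝓝 0) := by
    have h5 : Tendsto (fun N : ℕ =>
        H (s * cseq α β n N) / (s * cseq α β n N) ^ n) atTop (𝓝 0) :=
      (hHo.tendsto_div_nhds_zero).comp hx
    have h6 : Tendsto (fun N : ℕ => (s * cseq α β n N) ^ n / Real.log N)
        atTop (𝓝 (s ^ n / β * 1)) := by
      have := (L_div_logN hα).const_mul (s ^ n / β)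
      refine this.congr' ?_
      filter_upwards [(logalphaN_tendsto hα).eventually_gt_atTop 0] with N hL
      have hc : 0 < cseq α β n N := Real.rpow_pos_of_pos (by positivity) _
      rw [Real.mul_rpow hs.le hc.le, cseq_rpow_n hβ hn hL]
      field_simp
    have := h5.mul h6
    rw [zero_mul] at this
    refine this.congr' ?_
    filter_upwards [(logalphaN_tendsto hα).eventually_gt_atTop 0] with N hL
    have hc : 0 < cseq α β n N := Real.rpow_pos_of_pos (by positivity) _
    have hscn : ((s * cseq α β n N) ^ n) ≠ 0 := by positivity
    field_simp
  have := (t1.add t2).add t3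
  rw [mul_one, mul_zero, add_zero, add_zero] at this
  refine this.congr fun N => ?_
  simp only [Eseq]
  ring

lemma tail_repr {α β n l s : ℝ} (F : ℝ → ℝ) {H : ℝ → ℝ} (hα : 0 < α) (hβ : 0 < β)
    (hn : 0 < n) (hs : 0 < s) :
    ∀ᶠ N : ℕ in atTop,
      ((1 - F (s * cseq α β n N)) /
        (α * (s * cseq α β n N) ^ l *
          Real.exp (-β * (s * cseq α β n N) ^ n + H (s * cseq α β n N))))
        * Real.exp (Eseq α β n l s H N)
      = (N : ℝ) * (1 - F (s * cseq α β n N)) := by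
  filter_upwards [eventually_ge_atTop 1, (logalphaN_tendsto hα).eventually_gt_atTop 0]
    with N hN hL
  have hN0 : (0:ℝ) < N := by exact_mod_cast hN
  have hc : 0 < cseq α β n N := Real.rpow_pos_of_pos (by positivity) _
  have hD : 0 < α * (s * cseq α β n N) ^ l *
      Real.exp (-β * (s * cseq α β n N) ^ n + H (s * cseq α β n N)) := by positivity
  rw [← ND_eq_exp hα hβ hn hs hN hL]
  field_simp

lemma tail_to_zero {α β n l s : ℝ} {F H : ℝ → ℝ} (hα : 0 < α) (hβ : 0 < β)
    (hn : 0 < n) (hs : 0 < s) (hsn : 1 < s ^ n)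
    (hHo : H =o[atTop] fun x => x ^ n)
    (htail : Tendsto (fun x => (1 - F x) / (α * x ^ l * Real.exp (-β * x ^ n + H x)))
      atTop (𝓝 1)) :
    Tendsto (fun N : ℕ => (N : ℝ) * (1 - F (s * cseq α β n N))) atTop (𝓝 0) := by
  have hx : Tendsto (fun N : ℕ => s * cseq α β n N) atTop atTop :=
    (cseq_tendsto hα hβ hn).const_mul_atTop hs
  have hR : Tendsto (fun N : ℕ => (1 - F (s * cseq α β n N)) /
      (α * (s * cseq α β n N) ^ l *
        Real.exp (-β * (s * cseq α β n N) ^ n + H (s * cseq α β n N)))) atTop (𝓝 1) :=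
    htail.comp hx
  have hE : Tendsto (fun N : ℕ => Eseq α β n l s H N) atTop atBot := by
    have hdiv := Eseq_div_logN (l := l) hα hβ hn hs hHo
    have h2 := Filter.Tendsto.neg_mul_atTop (show 1 - s ^ n < 0 by linarith)
      hdiv logN_tendsto
    refine h2.congr' ?_
    filter_upwards [logN_tendsto.eventually_gt_atTop 0] with N hlog
    exact div_mul_cancel₀ _ hlog.ne'
  have hexp : Tendsto (fun N : ℕ => Real.exp (Eseq α β n l s H N)) atTop (𝓝 0) :=
    Real.tendsto_exp_atBot.comp hE
  have hfin := hR.mul hexp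
  rw [one_mul] at hfin
  exact hfin.congr' (tail_repr F hα hβ hn hs)

lemma tail_to_top {α β n l s : ℝ} {F H : ℝ → ℝ} (hα : 0 < α) (hβ : 0 < β)
    (hn : 0 < n) (hs : 0 < s) (hsn : s ^ n < 1)
    (hHo : H =o[atTop] fun x => x ^ n)
    (htail : Tendsto (fun x => (1 - F x) / (α * x ^ l * Real.exp (-β * x ^ n + H x)))
      atTop (𝓝 1)) :
    Tendsto (fun N : ℕ => (N : ℝ) * (1 - F (s * cseq α β n N))) atTop atTop := by
  have hx : Tendsto (fun N : ℕ => s * cseq α β n N) atTop atTop :=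
    (cseq_tendsto hα hβ hn).const_mul_atTop hs
  have hR : Tendsto (fun N : ℕ => (1 - F (s * cseq α β n N)) /
      (α * (s * cseq α β n N) ^ l *
        Real.exp (-β * (s * cseq α β n N) ^ n + H (s * cseq α β n N)))) atTop (𝓝 1) :=
    htail.comp hx
  have hE : Tendsto (fun N : ℕ => Eseq α β n l s H N) atTop atTop := by
    have hdiv := Eseq_div_logN (l := l) hα hβ hn hs hHo
    have h2 := Filter.Tendsto.pos_mul_atTop (show (0:ℝ) < 1 - s ^ n by linarith)
      hdiv logN_tendsto
    refine h2.congr' ?_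
    filter_upwards [logN_tendsto.eventually_gt_atTop 0] with N hlog
    exact div_mul_cancel₀ _ hlog.ne'
  have hexp : Tendsto (fun N : ℕ => Real.exp (Eseq α β n l s H N)) atTop atTop :=
    Real.tendsto_exp_atTop.comp hE
  exact (Filter.Tendsto.pos_mul_atTop one_pos hR hexp).congr' (tail_repr F hα hβ hn hs)


/-- For i.i.d. nonnegative `h i` with double-exponentially decaying tail
`1 - F_h(x) ~ α x^l e^(-β x^n + H(x))`, the normalized maximum
`h*_N / ((log(α N)/β)^(1/n))` converges to `1` in probability. -/
theorem normalized_max_tendsto_one_in_probability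
    {Ω : Type*} [MeasurableSpace Ω] (μ : Measure Ω) [IsProbabilityMeasure μ]
    (h : ℕ → Ω → ℝ) (hmeas : ∀ i, Measurable (h i)) (hnn : ∀ i ω, 0 ≤ h i ω)
    (hindep : iIndepFun h μ)
    (F : ℝ → ℝ) (hcdf : ∀ i x, (μ {ω | h i ω ≤ x}).toReal = F x)
    (α β n l : ℝ) (hα : 0 < α) (hβ : 0 < β) (hn : 0 < n)
    (H : ℝ → ℝ)
    (hslow : ∀ a > (0 : ℝ), Tendsto (fun x => H (a * x) / H x) atTop (𝓝 1))
    (hHo : H =o[atTop] fun x => x ^ n)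
    (htail : Tendsto
      (fun x => (1 - F x) / (α * x ^ l * Real.exp (-β * x ^ n + H x)))
      atTop (𝓝 1)) :
    ∀ δ > (0 : ℝ), Tendsto (fun N : ℕ =>
      (μ {ω | δ < |maxOver h N ω / ((Real.log (α * N) / β) ^ (1 / n)) - 1|}).toReal)
      atTop (𝓝 0) := by
  intro δ hδ
  set ε := min δ (1/2) with hεdef
  have hε0 : 0 < ε := lt_min hδ (by norm_num)
  have hεδ : ε ≤ δ := min_le_left _ _
  have hε1 : ε < 1 := lt_of_le_of_lt (min_le_right _ _) (by norm_num)
  have hF0 : ∀ x, 0 ≤ F x := fun x => (hcdf 0 x) ▸ ENNReal.toReal_nonneg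
  have hF1 : ∀ x, F x ≤ 1 := by
    intro x
    rw [← hcdf 0 x]
    calc (μ {ω | h 0 ω ≤ x}).toReal ≤ (1 : ENNReal).toReal :=
          ENNReal.toReal_mono ENNReal.one_ne_top prob_le_one
      _ = 1 := ENNReal.toReal_one
  -- asymptotic ingredients
  have hu : Tendsto (fun N : ℕ => (N : ℝ) * (1 - F ((1 + ε) * cseq α β n N)))
      atTop (𝓝 0) := by
    refine tail_to_zero (l := l) hα hβ hn (by linarith) ?_ hHo htail
    exact (Real.one_lt_rpow_iff_of_pos (by linarith)).mpr (Or.inl ⟨by linarith, hn⟩)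
  have hv' : Tendsto (fun N : ℕ => (N : ℝ) * (1 - F ((1 - ε) * cseq α β n N)))
      atTop atTop := by
    refine tail_to_top (l := l) hα hβ hn (by linarith) ?_ hHo htail
    exact Real.rpow_lt_one (by linarith) (by linarith) hn
  have hv : Tendsto (fun N : ℕ =>
      Real.exp (-((N : ℝ) * (1 - F ((1 - ε) * cseq α β n N))))) atTop (𝓝 0) :=
    Real.tendsto_exp_atBot.comp (tendsto_neg_atTop_atBot.comp hv')
  -- squeeze
  refine squeeze_zero' (Eventually.of_forall fun N => ENNReal.toReal_nonneg) ?_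
    (by simpa using hu.add hv)
  filter_upwards [eventually_ge_atTop 1, (logalphaN_tendsto hα).eventually_gt_atTop 0]
    with N hN hL
  have hc : 0 < cseq α β n N := Real.rpow_pos_of_pos (by positivity) _
  set c := cseq α β n N with hcdef
  set x₁ := (1 + ε) * c with hx₁
  set x₀ := (1 - ε) * c with hx₀
  -- subset of union
  have key_subset : {ω | δ < |maxOver h N ω / c - 1|} ⊆
      {ω | x₁ < maxOver h N ω} ∪ {ω | maxOver h N ω ≤ x₀} := by
    intro ω hω
    simp only [Set.mem_setOf_eq, Set.mem_union]
    have hε' : ε < |maxOver h N ω / c - 1| := lt_of_le_of_lt hεδ hω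
    rcases lt_abs.mp hε' with h1 | h1
    · left
      have : 1 + ε < maxOver h N ω / c := by linarith
      rw [lt_div_iff₀ hc] at this
      linarith [this]
    · right
      have : maxOver h N ω / c < 1 - ε := by linarith
      rw [div_lt_iff₀ hc] at this
      linarith [this]
  -- upper tail bound
  have meas_upper : (μ {ω | x₁ < maxOver h N ω}).toReal ≤ (N : ℝ) * (1 - F x₁) := by
    have hsub : {ω | x₁ < maxOver h N ω} ⊆ ⋃ i ∈ Finset.Icc 1 N, {ω | x₁ < h i ω} := by
      intro ω hω
      by_contra hcon
      simp only [Set.mem_iUnion, Set.mem_setOf_eq, not_exists, not_lt,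
        Finset.mem_Icc] at hcon
      have : maxOver h N ω ≤ x₁ := by
        refine csSup_le ⟨h 1 ω, ⟨1, by simp [hN], rfl⟩⟩ ?_
        rintro y ⟨i, hi, rfl⟩
        exact hcon i ⟨hi.1, hi.2⟩
      exact absurd hω (not_lt.mpr this)
    have htoReal : ∀ i, (μ {ω | x₁ < h i ω}).toReal = 1 - F x₁ := by
      intro i
      have hcompl : {ω | x₁ < h i ω} = {ω | h i ω ≤ x₁}ᶜ := by
        ext ω; simp [not_le]
      rw [hcompl, prob_compl_eq_one_sub (show MeasurableSet {ω | h i ω ≤ x₁} from (hmeas i) measurableSet_Iic),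
        ENNReal.toReal_sub_of_le prob_le_one ENNReal.one_ne_top,
        ENNReal.toReal_one, hcdf i x₁]
    calc (μ {ω | x₁ < maxOver h N ω}).toReal
        ≤ (∑ i ∈ Finset.Icc 1 N, μ {ω | x₁ < h i ω}).toReal := by
          refine ENNReal.toReal_mono ?_
            ((measure_mono hsub).trans (measure_biUnion_finset_le _ _))
          exact (ENNReal.sum_lt_top.mpr fun i _ => measure_lt_top μ _).ne
      _ = ∑ i ∈ Finset.Icc 1 N, (μ {ω | x₁ < h i ω}).toReal :=
          ENNReal.toReal_sum fun i _ => measure_ne_top μ _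
      _ = (N : ℝ) * (1 - F x₁) := by
          simp only [htoReal, Finset.sum_const, Nat.card_Icc, nsmul_eq_mul]
          norm_num
  -- lower tail bound
  have meas_lower : (μ {ω | maxOver h N ω ≤ x₀}).toReal ≤
      Real.exp (-((N : ℝ) * (1 - F x₀))) := by
    have hset : {ω | maxOver h N ω ≤ x₀} = ⋂ i ∈ Finset.Icc 1 N, {ω | h i ω ≤ x₀} := by
      ext ω
      simp only [Set.mem_iInter, Set.mem_setOf_eq, Finset.mem_Icc]
      constructor
      · intro hm i hi
        refine le_trans (le_csSup (((Set.finite_Icc 1 N).image _).bddAbove) ?_) hm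
        exact ⟨i, by simpa using hi, rfl⟩
      · intro hb
        refine csSup_le ⟨h 1 ω, ⟨1, by simp [hN], rfl⟩⟩ ?_
        rintro y ⟨i, hi, rfl⟩
        exact hb i ⟨hi.1, hi.2⟩
    have hprod : μ (⋂ i ∈ Finset.Icc 1 N, {ω | h i ω ≤ x₀})
        = ∏ i ∈ Finset.Icc 1 N, μ {ω | h i ω ≤ x₀} :=
      hindep.meas_biInter fun i _ => ⟨Set.Iic x₀, measurableSet_Iic, rfl⟩
    have heach : ∀ i, μ {ω | h i ω ≤ x₀} = ENNReal.ofReal (F x₀) := by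
      intro i
      rw [← hcdf i x₀, ENNReal.ofReal_toReal (measure_ne_top μ _)]
    have hFpow : (μ {ω | maxOver h N ω ≤ x₀}).toReal = F x₀ ^ N := by
      rw [hset, hprod]
      simp only [heach, Finset.prod_const, Nat.card_Icc]
      rw [ENNReal.toReal_pow, ENNReal.toReal_ofReal (hF0 x₀)]
      norm_num
    rw [hFpow]
    have h1 : F x₀ ≤ Real.exp (-(1 - F x₀)) := by
      have := Real.add_one_le_exp (-(1 - F x₀))
      linarith
    calc F x₀ ^ N ≤ (Real.exp (-(1 - F x₀))) ^ N := pow_le_pow_left₀ (hF0 _) h1 N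
      _ = Real.exp ((N : ℝ) * -(1 - F x₀)) := (Real.exp_nat_mul _ N).symm
      _ = Real.exp (-((N : ℝ) * (1 - F x₀))) := by ring_nf
  -- combine
  calc (μ {ω | δ < |maxOver h N ω / c - 1|}).toReal
      ≤ (μ {ω | x₁ < maxOver h N ω} + μ {ω | maxOver h N ω ≤ x₀}).toReal := by
        refine ENNReal.toReal_mono ?_
          ((measure_mono key_subset).trans (measure_union_le _ _))
        exact ENNReal.add_ne_top.mpr ⟨measure_ne_top μ _, measure_ne_top μ _⟩
    _ = (μ {ω | x₁ < maxOver h N ω}).toReal + (μ {ω | maxOver h N ω ≤ x₀}).toReal :=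
        ENNReal.toReal_add (measure_ne_top μ _) (measure_ne_top μ _)
    _ ≤ (N : ℝ) * (1 - F x₁) + Real.exp (-((N : ℝ) * (1 - F x₀))) :=
        add_le_add meas_upper meas_lower
end

section
/- Let $g_1,\dots,g_N$ be i.i.d. with CDF $F_g$ in class $\mathcal{C}$ (in particular $F_g(\epsilon)>0$ for all $\epsilon>0$ and $1-F_g(x)$ decays double-exponentially), and let $K_N=o(N)$. Then $\lim_{N\to\infty}\mathbb{E}[g_{K_N:N}]=0$, where $g_{K_N:N}$ is the $K_N$-th smallest order statistic. -/
open MeasureTheory ProbabilityTheory Filter Real Set Topology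

open scoped Classical in
/-- The `K`-th smallest value among `g 1, ..., g N`. -/
noncomputable def orderStat {Ω : Type*} (g : ℕ → Ω → ℝ) (N K : ℕ) (ω : Ω) : ℝ :=
  sInf {x : ℝ | K ≤ ((Finset.Icc 1 N).filter (fun i => g i ω ≤ x)).card}

open scoped ENNReal NNReal

section AuxLemmas

variable {Ω : Type*} [MeasurableSpace Ω]

lemma orderStat_le_iff {Ω : Type*} (g : ℕ → Ω → ℝ) {N K : ℕ} (hK1 : 1 ≤ K) (hKN : K ≤ N)
    (ω : Ω) (x : ℝ) :
    orderStat g N K ω ≤ x ↔ K ≤ ((Finset.Icc 1 N).filter (fun i => g i ω ≤ x)).card := by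
  have hN : (Finset.Icc 1 N).Nonempty := by
    rw [Finset.nonempty_Icc]; omega
  have hcard : (Finset.Icc 1 N).card = N := by
    rw [Nat.card_Icc]; omega
  set S : Set ℝ := {y : ℝ | K ≤ ((Finset.Icc 1 N).filter (fun i => g i ω ≤ y)).card} with hS
  have hSne : S.Nonempty := by
    refine ⟨(Finset.Icc 1 N).sup' hN (fun i => g i ω), ?_⟩
    have : (Finset.Icc 1 N).filter (fun i => g i ω ≤ (Finset.Icc 1 N).sup' hN (fun i => g i ω))
        = Finset.Icc 1 N := by
      apply Finset.filter_true_of_mem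
      intro i hi
      exact Finset.le_sup' (fun i => g i ω) hi
    simp only [hS, Set.mem_setOf_eq, this, hcard]
    exact hKN
  have hSbdd : BddBelow S := by
    refine ⟨(Finset.Icc 1 N).inf' hN (fun i => g i ω), ?_⟩
    intro s hs
    have hpos : 0 < ((Finset.Icc 1 N).filter (fun i => g i ω ≤ s)).card := lt_of_lt_of_le hK1 hs
    obtain ⟨i, hi⟩ := Finset.card_pos.mp hpos
    rw [Finset.mem_filter] at hi
    exact le_trans (Finset.inf'_le _ hi.1) hi.2
  constructor
  · intro h
    by_contra hlt
    push_neg at hlt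
    set J := (Finset.Icc 1 N).filter (fun i => ¬ g i ω ≤ x) with hJ
    have hJne : J.Nonempty := by
      rw [← Finset.card_pos]
      have heq : ((Finset.Icc 1 N).filter (fun i => g i ω ≤ x)).card + J.card = N := by
        rw [hJ]
        simpa [hcard] using Finset.card_filter_add_card_filter_not
          (s := Finset.Icc 1 N) (p := fun i => g i ω ≤ x)
      omega
    have hxlt : x < J.inf' hJne (fun i => g i ω) := by
      rw [Finset.lt_inf'_iff]
      intro i hi
      rw [hJ, Finset.mem_filter] at hi
      exact lt_of_not_ge hi.2
    have hlb : ∀ s ∈ S, J.inf' hJne (fun i => g i ω) ≤ s := by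
      intro s hs
      have hsub : ¬ ((Finset.Icc 1 N).filter (fun i => g i ω ≤ s) ⊆
          (Finset.Icc 1 N).filter (fun i => g i ω ≤ x)) := by
        intro hsub
        exact absurd (le_trans hs (Finset.card_le_card hsub)) (by omega)
      obtain ⟨i, hi1, hi2⟩ := Finset.not_subset.mp hsub
      rw [Finset.mem_filter] at hi1 hi2
      push_neg at hi2
      have hiJ : i ∈ J := by
        rw [hJ, Finset.mem_filter]
        exact ⟨hi1.1, not_le.mpr (hi2 hi1.1)⟩
      exact le_trans (Finset.inf'_le _ hiJ) hi1.2
    have : x < orderStat g N K ω := lt_of_lt_of_le hxlt (le_csInf hSne hlb)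
    exact absurd h (not_le.mpr this)
  · intro h
    exact csInf_le hSbdd h


lemma measurable_count (g : ℕ → Ω → ℝ) (hmeas : ∀ i, Measurable (g i)) (N : ℕ) (x : ℝ) :
    Measurable (fun ω => ((Finset.Icc 1 N).filter (fun i => g i ω ≤ x)).card) := by
  have : (fun ω => ((Finset.Icc 1 N).filter (fun i => g i ω ≤ x)).card)
      = fun ω => ∑ i ∈ Finset.Icc 1 N, if g i ω ≤ x then 1 else 0 := by
    funext ω
    rw [Finset.card_filter]
  rw [this]
  exact Finset.measurable_sum _ (fun i _ =>
    Measurable.ite (measurableSet_le (hmeas i) measurable_const) measurable_const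
      measurable_const)

lemma measurableSet_countEvent (g : ℕ → Ω → ℝ) (hmeas : ∀ i, Measurable (g i)) (N K : ℕ)
    (x : ℝ) :
    MeasurableSet {ω | K ≤ ((Finset.Icc 1 N).filter (fun i => g i ω ≤ x)).card} :=
  measurable_count g hmeas N x measurableSet_Ici


lemma orderStat_le_sum (g : ℕ → Ω → ℝ) {N K : ℕ} (hK1 : 1 ≤ K) (hKN : K ≤ N) (ω : Ω) :
    orderStat g N K ω ≤ ∑ i ∈ Finset.Icc 1 N, max (g i ω) 0 := by
  have hN : (Finset.Icc 1 N).Nonempty := by rw [Finset.nonempty_Icc]; omega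
  have hcard : (Finset.Icc 1 N).card = N := by rw [Nat.card_Icc]; omega
  apply csInf_le
  · refine ⟨(Finset.Icc 1 N).inf' hN (fun i => g i ω), ?_⟩
    intro s hs
    have hpos : 0 < ((Finset.Icc 1 N).filter (fun i => g i ω ≤ s)).card := lt_of_lt_of_le hK1 hs
    obtain ⟨i, hi⟩ := Finset.card_pos.mp hpos
    rw [Finset.mem_filter] at hi
    exact le_trans (Finset.inf'_le _ hi.1) hi.2
  · have : (Finset.Icc 1 N).filter
        (fun i => g i ω ≤ ∑ j ∈ Finset.Icc 1 N, max (g j ω) 0) = Finset.Icc 1 N := by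
      apply Finset.filter_true_of_mem
      intro i hi
      calc g i ω ≤ max (g i ω) 0 := le_max_left _ _
        _ ≤ ∑ j ∈ Finset.Icc 1 N, max (g j ω) 0 :=
          Finset.single_le_sum (f := fun j => max (g j ω) 0)
            (fun j _ => le_max_right _ _) hi
    simp only [Set.mem_setOf_eq, this, hcard]
    exact hKN

lemma orderStat_nonneg (g : ℕ → Ω → ℝ) {N K : ℕ} (hK1 : 1 ≤ K)
    (ω : Ω) (hpos : ∀ i ∈ Finset.Icc 1 N, 0 < g i ω) :
    0 ≤ orderStat g N K ω := by
  apply Real.sInf_nonneg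
  · intro s hs
    have hposc : 0 < ((Finset.Icc 1 N).filter (fun i => g i ω ≤ s)).card := lt_of_lt_of_le hK1 hs
    obtain ⟨i, hi⟩ := Finset.card_pos.mp hposc
    rw [Finset.mem_filter] at hi
    exact le_of_lt (lt_of_lt_of_le (hpos i hi.1) hi.2)


lemma tail_bound (F : ℝ → ℝ) (α β n l : ℝ) (hα : 0 < α) (hβ : 0 < β) (hn : 0 < n)
    (H : ℝ → ℝ) (hHo : H =o[atTop] fun x => x ^ n)
    (htail : Tendsto
      (fun x => (1 - F x) / (α * x ^ l * Real.exp (-β * x ^ n + H x)))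
      atTop (𝓝 1)) :
    ∀ᶠ t in atTop, 1 - F t ≤ t ^ (-2 : ℝ) := by
  -- ψ t = log(2α) + (l+2) log t + H t - β t^n  → -∞
  set ψ : ℝ → ℝ := fun t => Real.log (2*α) + (l+2) * Real.log t + H t - β * t ^ n with hψ
  have hψ_div : Tendsto (fun t => ψ t / t ^ n) atTop (𝓝 (-β)) := by
    have h1 : Tendsto (fun t : ℝ => Real.log (2*α) / t ^ n) atTop (𝓝 0) :=
      tendsto_const_nhds.div_atTop (tendsto_rpow_atTop hn)
    have h2 : Tendsto (fun t : ℝ => ((l+2) * Real.log t) / t ^ n) atTop (𝓝 0) :=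
      ((isLittleO_log_rpow_atTop hn).const_mul_left (l+2)).tendsto_div_nhds_zero
    have h3 : Tendsto (fun t : ℝ => H t / t ^ n) atTop (𝓝 0) :=
      hHo.tendsto_div_nhds_zero
    have h4 : Tendsto (fun t : ℝ => (β * t ^ n) / t ^ n) atTop (𝓝 β) := by
      apply Tendsto.congr' ((eventually_gt_atTop 0).mono fun t ht => ?_) tendsto_const_nhds
      rw [mul_div_assoc, div_self (by positivity), mul_one]
    have := ((h1.add h2).add h3).sub h4
    rw [zero_add, zero_add, zero_sub] at this
    apply this.congr' ((eventually_gt_atTop 0).mono fun t ht => ?_)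
    rw [hψ]
    ring
  have hψ_bot : Tendsto ψ atTop atBot := by
    have := hψ_div.neg_mul_atTop (neg_neg_iff_pos.mpr hβ) (tendsto_rpow_atTop hn)
    apply this.congr' ((eventually_gt_atTop 0).mono fun t ht => ?_)
    rw [div_mul_cancel₀]
    positivity
  have hψ_le : ∀ᶠ t in atTop, ψ t ≤ 0 := hψ_bot.eventually_le_atBot 0
  have hratio : ∀ᶠ t in atTop,
      (1 - F t) / (α * t ^ l * Real.exp (-β * t ^ n + H t)) < 2 :=
    htail.eventually_lt_const one_lt_two
  filter_upwards [hψ_le, hratio, eventually_gt_atTop 1] with t hle hr ht1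
  have ht0 : (0:ℝ) < t := lt_trans one_pos ht1
  have hD : 0 < α * t ^ l * Real.exp (-β * t ^ n + H t) := by positivity
  have h5 : 1 - F t < 2 * (α * t ^ l * Real.exp (-β * t ^ n + H t)) :=
    (div_lt_iff₀ hD).mp hr
  have e1 : Real.exp (ψ t) = (2*α) * t ^ (l+2) * Real.exp (-β * t ^ n + H t) := by
    have hψt : ψ t = Real.log (2*α) + Real.log (t ^ (l+2)) + (-β * t ^ n + H t) := by
      rw [hψ, Real.log_rpow ht0]
      ring
    rw [hψt, Real.exp_add, Real.exp_add, Real.exp_log (by positivity),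
      Real.exp_log (by positivity)]
  have e2 : 2 * (α * t ^ l * Real.exp (-β * t ^ n + H t)) * t ^ (2:ℝ) = Real.exp (ψ t) := by
    calc 2 * (α * t ^ l * Real.exp (-β * t ^ n + H t)) * t ^ (2:ℝ)
        = (2*α) * (t ^ l * t ^ (2:ℝ)) * Real.exp (-β * t ^ n + H t) := by ring
      _ = (2*α) * t ^ (l+2) * Real.exp (-β * t ^ n + H t) := by
          rw [← Real.rpow_add ht0]
      _ = Real.exp (ψ t) := e1.symm
  have h6 : 2 * (α * t ^ l * Real.exp (-β * t ^ n + H t)) * t ^ (2:ℝ) ≤ 1 := by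
    rw [e2, ← Real.exp_zero]
    exact Real.exp_le_exp.mpr hle
  have ht2 : (0:ℝ) < t ^ (2:ℝ) := by positivity
  have h7 : 2 * (α * t ^ l * Real.exp (-β * t ^ n + H t)) ≤ t ^ (-2:ℝ) := by
    rw [show (-2:ℝ) = -(2:ℝ) by norm_num, Real.rpow_neg ht0.le, ← one_div]
    exact (le_div_iff₀ ht2).mpr h6
  exact le_of_lt (lt_of_lt_of_le h5 h7)


lemma ae_pos {μ : Measure Ω} [IsProbabilityMeasure μ] (g : ℕ → Ω → ℝ)
    (hmeas : ∀ i, Measurable (g i)) (F : ℝ → ℝ)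
    (hcdf : ∀ i x, (μ {ω | g i ω ≤ x}).toReal = F x) (hF0 : F 0 = 0) (i : ℕ) :
    ∀ᵐ ω ∂μ, 0 < g i ω := by
  have h0 : μ {ω | g i ω ≤ 0} = 0 := by
    have := hcdf i 0
    rw [hF0] at this
    exact (ENNReal.toReal_eq_zero_iff _).mp this |>.resolve_right (measure_ne_top μ _)
  filter_upwards [ae_iff.mpr (by simpa using h0 : μ {ω | ¬ 0 < g i ω} = 0)] with ω hω
  exact hω

lemma cdf_facts {μ : Measure Ω} [IsProbabilityMeasure μ] (g : ℕ → Ω → ℝ)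
    (hmeas : ∀ i, Measurable (g i)) (F : ℝ → ℝ)
    (hcdf : ∀ i x, (μ {ω | g i ω ≤ x}).toReal = F x) (i : ℕ) (t : ℝ) :
    μ {ω | t < g i ω} = ENNReal.ofReal (1 - F t) := by
  have hFnn : 0 ≤ F t := by rw [← hcdf i t]; exact ENNReal.toReal_nonneg
  have hms : MeasurableSet {ω | g i ω ≤ t} := measurableSet_le (hmeas i) measurable_const
  have hμeq : μ {ω | g i ω ≤ t} = ENNReal.ofReal (F t) := by
    rw [← hcdf i t, ENNReal.ofReal_toReal (measure_ne_top μ _)]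
  have hset : {ω | t < g i ω} = {ω | g i ω ≤ t}ᶜ := by
    ext ω; simp [not_le]
  rw [hset, measure_compl hms (measure_ne_top μ _), measure_univ, hμeq,
    ENNReal.ofReal_sub 1 hFnn, ENNReal.ofReal_one]

lemma integrable_and_bound (μ : Measure Ω) [IsProbabilityMeasure μ] (g : ℕ → Ω → ℝ)
    (hmeas : ∀ i, Measurable (g i)) (F : ℝ → ℝ)
    (hcdf : ∀ i x, (μ {ω | g i ω ≤ x}).toReal = F x) (hF0 : F 0 = 0)
    (htail2 : ∀ᶠ t in atTop, 1 - F t ≤ t ^ (-2 : ℝ)) :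
    ∃ C₀ : ℝ, ∀ i, Integrable (g i) μ ∧ ∫ ω, max (g i ω) 0 ∂μ ≤ C₀ := by
  have hFnn : ∀ t, 0 ≤ F t := fun t => by rw [← hcdf 0 t]; exact ENNReal.toReal_nonneg
  obtain ⟨T₀, hT₀⟩ := eventually_atTop.mp htail2
  set T := max T₀ 1 with hT
  have hT0 : (0:ℝ) < T := lt_of_lt_of_le one_pos (le_max_right _ _)
  -- the dominating lintegral
  set B : ℝ≥0∞ := ∫⁻ t in Ioi T, (‖t ^ (-2:ℝ)‖₊ : ℝ≥0∞) with hB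
  have hBfin : B < ⊤ :=
    (integrableOn_Ioi_rpow_of_lt (by norm_num) hT0).hasFiniteIntegral
  set Jtop : ℝ≥0∞ := ENNReal.ofReal T + B with hJtop
  have hJfin : Jtop ≠ ⊤ := by
    rw [hJtop]
    exact ENNReal.add_ne_top.mpr ⟨ENNReal.ofReal_ne_top, hBfin.ne⟩
  have hsplit : ∫⁻ t in Ioi (0:ℝ), ENNReal.ofReal (1 - F t) ≤ Jtop := by
    rw [← Set.Ioc_union_Ioi_eq_Ioi hT0.le,
      lintegral_union measurableSet_Ioi (Set.Ioc_disjoint_Ioi le_rfl)]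
    apply add_le_add
    · calc ∫⁻ t in Ioc (0:ℝ) T, ENNReal.ofReal (1 - F t)
          ≤ ∫⁻ _ in Ioc (0:ℝ) T, 1 := by
            apply lintegral_mono
            intro t
            exact ENNReal.ofReal_le_one.mpr (by linarith [hFnn t])
        _ = ENNReal.ofReal T := by
            rw [setLIntegral_one, Real.volume_Ioc, sub_zero]
    · calc ∫⁻ t in Ioi T, ENNReal.ofReal (1 - F t)
          ≤ ∫⁻ t in Ioi T, (‖t ^ (-2:ℝ)‖₊ : ℝ≥0∞) := by
            apply lintegral_mono_ae
            rw [ae_restrict_iff' measurableSet_Ioi]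
            refine Eventually.of_forall fun t ht => ?_
            have h1 : 1 - F t ≤ t ^ (-2:ℝ) := hT₀ t (le_of_lt (lt_of_le_of_lt (le_max_left _ _) ht))
            calc ENNReal.ofReal (1 - F t) ≤ ENNReal.ofReal (t ^ (-2:ℝ)) :=
                  ENNReal.ofReal_le_ofReal h1
              _ ≤ (‖t ^ (-2:ℝ)‖₊ : ℝ≥0∞) := Real.ofReal_le_enorm _
        _ = B := rfl
  refine ⟨Jtop.toReal, fun i => ?_⟩
  set f : Ω → ℝ := fun ω => max (g i ω) 0 with hf
  have hfmeas : Measurable f := (hmeas i).max measurable_const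
  have hfnn : ∀ ω, 0 ≤ f ω := fun ω => le_max_right _ _
  have hlayer : ∫⁻ ω, ENNReal.ofReal (f ω) ∂μ = ∫⁻ t in Ioi (0:ℝ), μ {a | t < f a} :=
    lintegral_eq_lintegral_meas_lt μ (Eventually.of_forall hfnn) hfmeas.aemeasurable
  have hsetEq : ∀ t ∈ Ioi (0:ℝ), μ {a | t < f a} = ENNReal.ofReal (1 - F t) := by
    intro t ht
    have : {a | t < f a} = {a | t < g i a} := by
      ext a
      simp only [hf, Set.mem_setOf_eq, lt_max_iff]
      exact ⟨fun h => h.resolve_right (not_lt.mpr (le_of_lt ht)), Or.inl⟩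
    rw [this, cdf_facts g hmeas F hcdf i t]
  have hkey : ∫⁻ ω, ENNReal.ofReal (f ω) ∂μ ≤ Jtop := by
    rw [hlayer, setLIntegral_congr_fun measurableSet_Ioi hsetEq]
    exact hsplit
  have hfi : Integrable f μ := by
    refine ⟨hfmeas.aestronglyMeasurable, ?_⟩
    rw [hasFiniteIntegral_iff_norm]
    calc ∫⁻ a, ENNReal.ofReal ‖f a‖ ∂μ = ∫⁻ a, ENNReal.ofReal (f a) ∂μ := by
          congr 1
          funext a
          rw [Real.norm_of_nonneg (hfnn a)]
      _ ≤ Jtop := hkey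
      _ < ⊤ := lt_top_iff_ne_top.mpr hJfin
  have hint : ∫ ω, f ω ∂μ ≤ Jtop.toReal := by
    rw [integral_eq_lintegral_of_nonneg_ae (Eventually.of_forall hfnn)
      hfmeas.aestronglyMeasurable]
    exact ENNReal.toReal_mono hJfin hkey
  have hae : f =ᵐ[μ] g i := by
    filter_upwards [ae_pos g hmeas F hcdf hF0 i] with ω hω
    simp [hf, max_eq_left hω.le]
  exact ⟨hfi.congr hae, hint⟩


lemma exists_subset_cover (g : ℕ → Ω → ℝ) {N K : ℕ} (hK1 : 1 ≤ K) (hKN : K ≤ N)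
    (ε : ℝ) (i : ℕ) (ω : Ω)
    (hA : ¬ K ≤ ((Finset.Icc 1 N).filter (fun j => g j ω ≤ ε)).card) :
    ∃ T ∈ Finset.powersetCard (N - K) ((Finset.Icc 1 N).erase i),
      ∀ j ∈ T, ε < g j ω := by
  set U := (Finset.Icc 1 N).filter (fun j => ¬ g j ω ≤ ε) with hU
  have hcard : (Finset.Icc 1 N).card = N := by rw [Nat.card_Icc]; omega
  have hUcard : N - K + 1 ≤ U.card := by
    have heq := Finset.card_filter_add_card_filter_not
      (s := Finset.Icc 1 N) (p := fun j => g j ω ≤ ε)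
    rw [hcard] at heq
    rw [hU]
    omega
  have hUe : N - K ≤ (U.erase i).card := by
    have := Finset.pred_card_le_card_erase (a := i) (s := U)
    omega
  obtain ⟨T, hTsub, hTcard⟩ := Finset.exists_subset_card_eq hUe
  refine ⟨T, ?_, ?_⟩
  · rw [Finset.mem_powersetCard]
    refine ⟨hTsub.trans (Finset.erase_subset_erase i (Finset.filter_subset _ _)), hTcard⟩
  · intro j hj
    have : j ∈ U := Finset.mem_of_mem_erase (hTsub hj)
    rw [hU, Finset.mem_filter] at this
    exact lt_of_not_ge this.2

lemma setIntegral_indep (μ : Measure Ω) [IsProbabilityMeasure μ] (g : ℕ → Ω → ℝ)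
    (hmeas : ∀ i, Measurable (g i))
    (hindep : iIndepFun g μ)
    (F : ℝ → ℝ) (hcdf : ∀ i x, (μ {ω | g i ω ≤ x}).toReal = F x)
    (ε : ℝ) {i : ℕ} {T : Finset ℕ} (hiT : i ∉ T) (hint : Integrable (g i) μ) :
    ∫ ω in ⋂ j ∈ T, {ω' | ε < g j ω'}, max (g i ω) 0 ∂μ
      = (1 - F ε) ^ T.card * ∫ ω, max (g i ω) 0 ∂μ := by
  have hFle : F ε ≤ 1 := by
    rw [← hcdf 0 ε]
    exact ENNReal.toReal_le_of_le_ofReal zero_le_one (by simpa using prob_le_one)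
  have hFnn : 0 ≤ F ε := by rw [← hcdf 0 ε]; exact ENNReal.toReal_nonneg
  set B : Set Ω := ⋂ j ∈ T, {ω' | ε < g j ω'} with hB
  have hBmeas : MeasurableSet B :=
    MeasurableSet.biInter T.countable_toSet
      (fun j _ => measurableSet_lt measurable_const (hmeas j))
  have hμB : μ B = ENNReal.ofReal (1 - F ε) ^ T.card := by
    rw [hB, show (⋂ j ∈ T, {ω' | ε < g j ω'}) = ⋂ j ∈ T, g j ⁻¹' (Ioi ε) from rfl,
      hindep.meas_biInter (fun j _ => ⟨Ioi ε, measurableSet_Ioi, rfl⟩)]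
    rw [Finset.prod_congr rfl (fun j (_ : j ∈ T) =>
      (show μ (g j ⁻¹' (Ioi ε)) = ENNReal.ofReal (1 - F ε) from cdf_facts g hmeas F hcdf j ε)),
      Finset.prod_const]
  have hμBr : (μ B).toReal = (1 - F ε) ^ T.card := by
    rw [hμB, ENNReal.toReal_pow, ENNReal.toReal_ofReal (by linarith)]
  -- the composed independent family
  set φ : ℕ → ℝ → ℝ := fun j x => if j = i then max x 0
    else Set.indicator (Ioi ε) (fun _ => (1:ℝ)) x with hφ
  have hφmeas : ∀ j, Measurable (φ j) := by
    intro j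
    rw [hφ]
    dsimp only
    by_cases hj : j = i
    · simp only [if_pos hj]
      exact measurable_id.max measurable_const
    · simp only [if_neg hj]
      exact measurable_const.indicator measurableSet_Ioi
  have hcomp : iIndepFun (fun j => φ j ∘ g j) μ :=
    hindep.comp φ hφmeas
  have hIF : IndepFun (∏ j ∈ T, (φ j ∘ g j)) (φ i ∘ g i) μ :=
    hcomp.indepFun_finsetProd_of_notMem
      (fun j => (hφmeas j).comp (hmeas j)) hiT
  have hProd : (∏ j ∈ T, (φ j ∘ g j)) = Set.indicator B (fun _ => (1:ℝ)) := by
    funext ω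
    rw [Finset.prod_apply]
    by_cases hω : ω ∈ B
    · rw [Set.indicator_of_mem hω]
      apply Finset.prod_eq_one
      intro j hj
      have hjne : j ≠ i := fun h => hiT (h ▸ hj)
      have hωj : ε < g j ω := by
        rw [hB] at hω
        exact Set.mem_iInter₂.mp hω j hj
      show φ j (g j ω) = 1
      rw [hφ]
      dsimp only
      rw [if_neg hjne, Set.indicator_of_mem (Set.mem_Ioi.mpr hωj)]
    · rw [Set.indicator_of_notMem hω]
      rw [hB, Set.mem_iInter₂] at hω
      push_neg at hω
      obtain ⟨j, hj, hωj⟩ := hω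
      apply Finset.prod_eq_zero hj
      have hjne : j ≠ i := fun h => hiT (h ▸ hj)
      show φ j (g j ω) = 0
      rw [hφ]
      dsimp only
      rw [if_neg hjne]
      have hnot : g j ω ∉ Ioi ε := fun h => hωj (Set.mem_setOf.mpr (Set.mem_Ioi.mp h))
      exact Set.indicator_of_notMem hnot _
  have hQ : (φ i ∘ g i) = fun ω => max (g i ω) 0 := by
    funext ω
    simp [hφ, Function.comp]
  have hPint : Integrable (Set.indicator B (fun _ => (1:ℝ))) μ :=
    (integrable_const (1:ℝ)).indicator hBmeas
  have hQint : Integrable (fun ω => max (g i ω) 0) μ := hint.pos_part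
  have hmul := hIF.integral_mul_eq_mul_integral (hProd ▸ hPint).aestronglyMeasurable (hQ ▸ hQint).aestronglyMeasurable
  rw [hProd, hQ] at hmul
  have hLHS : ∫ ω in B, max (g i ω) 0 ∂μ
      = ∫ ω, (Set.indicator B (fun _ => (1:ℝ)) * fun ω => max (g i ω) 0) ω ∂μ := by
    rw [← integral_indicator hBmeas]
    congr 1
    funext ω
    by_cases hω : ω ∈ B
    · simp [Set.indicator_of_mem hω]
    · simp [Set.indicator_of_notMem hω]
  rw [hLHS, hmul, integral_indicator_const (1:ℝ) hBmeas]
  rw [measureReal_def, hμBr]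
  simp [mul_comm]


lemma choose_term_le_one {x y : ℝ} (hx : 0 ≤ x) (hy : 0 ≤ y) (hxy : x + y = 1)
    {N k : ℕ} (hk : k ≤ N) : (N.choose k : ℝ) * x ^ k * y ^ (N - k) ≤ 1 := by
  have hbin : ∑ m ∈ Finset.range (N + 1), x ^ m * y ^ (N - m) * (N.choose m : ℝ) = 1 := by
    rw [← add_pow, hxy, one_pow]
  calc (N.choose k : ℝ) * x ^ k * y ^ (N - k)
      = x ^ k * y ^ (N - k) * (N.choose k : ℝ) := by ring
    _ ≤ ∑ m ∈ Finset.range (N + 1), x ^ m * y ^ (N - m) * (N.choose m : ℝ) :=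
        Finset.single_le_sum (f := fun m => x ^ m * y ^ (N - m) * (N.choose m : ℝ))
          (fun m _ => by positivity) (Finset.mem_range.mpr (Nat.lt_succ_of_le hk))
    _ = 1 := hbin

lemma decay_to_zero {p q : ℝ} (hp : 0 < p) (hq0 : 0 ≤ q) (hpq : p + q = 1)
    (K : ℕ → ℕ) (hK : ∀ N, 1 ≤ K N ∧ K N ≤ N)
    (hKo : Tendsto (fun N : ℕ => (K N : ℝ) / N) atTop (𝓝 0)) :
    Tendsto (fun N : ℕ => (N : ℝ) * (N.choose (N - K N) : ℝ) * q ^ (N - K N))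
      atTop (𝓝 0) := by
  set s : ℝ := p / 2 with hs
  set y : ℝ := 1 - p / 2 with hy
  have hp1 : p ≤ 1 := by nlinarith
  have hs0 : 0 < s := by rw [hs]; positivity
  have hy0 : 0 < y := by rw [hy]; nlinarith
  have hsy : s + y = 1 := by rw [hs, hy]; ring
  set r : ℝ := q / y with hr
  have hr0 : 0 ≤ r := div_nonneg hq0 hy0.le
  have hr1 : r < 1 := by
    rw [hr, div_lt_one hy0, hy]
    nlinarith
  have hbound : ∀ᶠ N : ℕ in atTop,
      (N : ℝ) * (N.choose (N - K N) : ℝ) * q ^ (N - K N)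
        ≤ (N : ℝ) * ((1 / s) ^ K N * r ^ (N - K N)) := by
    filter_upwards [eventually_ge_atTop 1] with N hN1
    have hKN := (hK N).2
    have hterm := choose_term_le_one hs0.le hy0.le hsy hKN
    have e4 : s ^ K N * (1 / s) ^ K N = 1 := by
      rw [← mul_pow, mul_one_div_cancel hs0.ne', one_pow]
    have e5 : y ^ (N - K N) * r ^ (N - K N) = q ^ (N - K N) := by
      rw [← mul_pow]
      congr 1
      rw [hr]
      field_simp
    have h2 : (N.choose (K N) : ℝ) * q ^ (N - K N)
        ≤ (1 / s) ^ K N * r ^ (N - K N) := by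
      calc (N.choose (K N) : ℝ) * q ^ (N - K N)
          = (N.choose (K N) : ℝ) * s ^ K N * y ^ (N - K N)
              * ((1 / s) ^ K N * r ^ (N - K N)) := by
            rw [show (N.choose (K N) : ℝ) * s ^ K N * y ^ (N - K N)
                * ((1 / s) ^ K N * r ^ (N - K N))
              = (N.choose (K N) : ℝ) * (s ^ K N * (1 / s) ^ K N)
                * (y ^ (N - K N) * r ^ (N - K N)) by ring, e4, e5, mul_one]
        _ ≤ 1 * ((1 / s) ^ K N * r ^ (N - K N)) :=
            mul_le_mul_of_nonneg_right hterm (by positivity)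
        _ = (1 / s) ^ K N * r ^ (N - K N) := one_mul _
    calc (N : ℝ) * (N.choose (N - K N) : ℝ) * q ^ (N - K N)
        = (N : ℝ) * ((N.choose (K N) : ℝ) * q ^ (N - K N)) := by
          rw [Nat.choose_symm hKN]; ring
      _ ≤ (N : ℝ) * ((1 / s) ^ K N * r ^ (N - K N)) :=
          mul_le_mul_of_nonneg_left h2 (Nat.cast_nonneg N)
  -- now show the majorant tends to 0
  by_cases hq : q = 0
  · -- r = 0, and eventually N - K N ≥ 1 so majorant vanishes
    have hrz : r = 0 := by rw [hr, hq, zero_div]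
    have hev : ∀ᶠ N : ℕ in atTop, (N : ℝ) * ((1 / s) ^ K N * r ^ (N - K N)) = 0 := by
      have hhalf : ∀ᶠ N : ℕ in atTop, (K N : ℝ) / N < 1 / 2 :=
        hKo.eventually_lt_const (by norm_num)
      filter_upwards [hhalf, eventually_ge_atTop 1] with N h2 hN1
      have hNpos : (0:ℝ) < N := by exact_mod_cast hN1
      have hKlt : K N < N := by
        have : (K N : ℝ) < N := by
          have := (div_lt_iff₀ hNpos).mp h2
          nlinarith
        exact_mod_cast this
      have : 1 ≤ N - K N := by omega
      rw [hrz, zero_pow (by omega), mul_zero, mul_zero]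
    have hmaj : Tendsto (fun N : ℕ => (N : ℝ) * ((1 / s) ^ K N * r ^ (N - K N)))
        atTop (𝓝 0) := by
      rw [tendsto_congr' hev]
      exact tendsto_const_nhds
    apply squeeze_zero' ?_ hbound hmaj
    filter_upwards with N
    have := (hK N).2
    positivity
  · have hq0' : 0 < q := lt_of_le_of_ne hq0 (Ne.symm hq)
    have hr0' : 0 < r := div_pos hq0' hy0
    have hlogr : Real.log r < 0 := Real.log_neg hr0' hr1
    set d : ℕ → ℝ := fun N => Real.log N / N + (K N : ℝ) / N * Real.log (1 / s)
        + (1 - (K N : ℝ) / N) * Real.log r with hd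
    have hkey : ∀ᶠ N : ℕ in atTop,
        (N : ℝ) * ((1 / s) ^ K N * r ^ (N - K N)) = Real.exp (d N * N) := by
      filter_upwards [eventually_ge_atTop 1] with N hN1
      have hNpos : (0:ℝ) < N := by exact_mod_cast hN1
      have hKN := (hK N).2
      have hcast : ((N - K N : ℕ) : ℝ) = (N : ℝ) - K N := by
        rw [Nat.cast_sub hKN]
      have hdN : d N * N = Real.log N + (K N : ℝ) * Real.log (1 / s)
          + ((N - K N : ℕ) : ℝ) * Real.log r := by
        rw [hd, hcast]
        field_simp
      rw [hdN, Real.exp_add, Real.exp_add, Real.exp_log hNpos,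
        ← Real.log_pow (1/s) (K N), Real.exp_log (by positivity),
        ← Real.log_pow r (N - K N), Real.exp_log (by positivity), mul_assoc]
    have hdlim : Tendsto d atTop (𝓝 (Real.log r)) := by
      have l1 : Tendsto (fun x : ℝ => Real.log x / x) atTop (𝓝 0) := by
        have := (isLittleO_log_rpow_atTop one_pos).tendsto_div_nhds_zero
        apply this.congr
        intro x
        rw [Real.rpow_one]
      have l1' : Tendsto (fun N : ℕ => Real.log N / N) atTop (𝓝 0) :=
        l1.comp tendsto_natCast_atTop_atTop
      have l2 := hKo.mul_const (Real.log (1 / s))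
      rw [zero_mul] at l2
      have l3 := ((tendsto_const_nhds (x := (1:ℝ))).sub hKo).mul_const (Real.log r)
      rw [sub_zero, one_mul] at l3
      have h := (l1'.add l2).add l3
      rw [zero_add, zero_add] at h
      exact h
    have hebot : Tendsto (fun N : ℕ => d N * N) atTop atBot :=
      hdlim.neg_mul_atTop hlogr tendsto_natCast_atTop_atTop
    have hmaj : Tendsto (fun N : ℕ => (N : ℝ) * ((1 / s) ^ K N * r ^ (N - K N)))
        atTop (𝓝 0) := by
      rw [tendsto_congr' hkey]
      exact Real.tendsto_exp_atBot.comp hebot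
    apply squeeze_zero' ?_ hbound hmaj
    filter_upwards with N
    positivity


lemma main_estimate (μ : Measure Ω) [IsProbabilityMeasure μ] (g : ℕ → Ω → ℝ)
    (hmeas : ∀ i, Measurable (g i))
    (hindep : iIndepFun g μ)
    (F : ℝ → ℝ) (hcdf : ∀ i x, (μ {ω | g i ω ≤ x}).toReal = F x)
    {N K : ℕ} (hK1 : 1 ≤ K) (hKN : K ≤ N)
    {ε : ℝ} (hε : 0 < ε) (hFε1 : F ε ≤ 1)
    {C₀ : ℝ} (hC₀ : ∀ i, Integrable (g i) μ ∧ ∫ ω, max (g i ω) 0 ∂μ ≤ C₀) (hC₀nn : 0 ≤ C₀)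
    (hgpos : ∀ i, ∀ᵐ ω ∂μ, 0 < g i ω) :
    ∫ ω, orderStat g N K ω ∂μ
      ≤ ε + ((N : ℝ) * (N.choose (N - K) : ℝ) * (1 - F ε) ^ (N - K)) * C₀ := by
  have hq0 : 0 ≤ 1 - F ε := by linarith
  have hcardIcc : (Finset.Icc 1 N).card = N := by rw [Nat.card_Icc]; omega
  set X : Ω → ℝ := fun ω => orderStat g N K ω with hX
  set S : Ω → ℝ := fun ω => ∑ i ∈ Finset.Icc 1 N, max (g i ω) 0 with hS
  set A : Set Ω := {ω | K ≤ ((Finset.Icc 1 N).filter (fun j => g j ω ≤ ε)).card}ᶜ with hA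
  have hAmeas : MeasurableSet A := (measurableSet_countEvent g hmeas N K ε).compl
  have hXmeas : Measurable X := by
    apply measurable_of_Iic
    intro x
    have : X ⁻¹' (Iic x) = {ω | K ≤ ((Finset.Icc 1 N).filter (fun i => g i ω ≤ x)).card} := by
      ext ω
      simp only [Set.mem_preimage, Set.mem_Iic, Set.mem_setOf_eq, hX]
      exact orderStat_le_iff g hK1 hKN ω x
    rw [this]
    exact measurableSet_countEvent g hmeas N K x
  have hSint : Integrable S μ :=
    integrable_finset_sum _ (fun i _ => ((hC₀ i).1).pos_part)
  have hXS : ∀ ω, X ω ≤ S ω := fun ω => orderStat_le_sum g hK1 hKN ω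
  have hposall : ∀ᵐ ω ∂μ, ∀ i ∈ Finset.Icc 1 N, 0 < g i ω :=
    ae_all_iff.mpr (fun i => by filter_upwards [hgpos i] with ω h _; exact h)
  have hXpos : ∀ᵐ ω ∂μ, 0 ≤ X ω := by
    filter_upwards [hposall] with ω hω
    exact orderStat_nonneg g hK1 ω hω
  have hXint : Integrable X μ := by
    apply Integrable.mono' hSint hXmeas.aestronglyMeasurable
    filter_upwards [hXpos] with ω h0
    rw [Real.norm_of_nonneg h0]
    exact hXS ω
  have hsplit : ∫ ω, X ω ∂μ = ∫ ω in A, X ω ∂μ + ∫ ω in Aᶜ, X ω ∂μ :=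
    (integral_add_compl hAmeas hXint).symm
  have hb1 : ∫ ω in Aᶜ, X ω ∂μ ≤ ε := by
    have hle : ∀ ω ∈ Aᶜ, X ω ≤ ε := by
      intro ω hω
      rw [hA, compl_compl] at hω
      exact (orderStat_le_iff g hK1 hKN ω ε).mpr hω
    calc ∫ ω in Aᶜ, X ω ∂μ ≤ ∫ _ω in Aᶜ, ε ∂μ :=
          setIntegral_mono_on hXint.integrableOn
            (integrableOn_const (measure_ne_top μ _)) hAmeas.compl hle
      _ = (μ Aᶜ).toReal • ε := setIntegral_const ε
      _ ≤ ε := by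
          have h1 : (μ Aᶜ).toReal ≤ 1 := by
            simpa using ENNReal.toReal_mono (measure_ne_top μ Set.univ) (measure_mono (Set.subset_univ Aᶜ))
          rw [smul_eq_mul]
          nlinarith
  have hb2 : ∫ ω in A, X ω ∂μ
      ≤ ((N : ℝ) * (N.choose (N - K) : ℝ) * (1 - F ε) ^ (N - K)) * C₀ := by
    have h6 : ∫ ω in A, X ω ∂μ ≤ ∫ ω in A, S ω ∂μ :=
      setIntegral_mono hXint.integrableOn hSint.integrableOn hXS
    have h7 : ∫ ω in A, S ω ∂μ = ∑ i ∈ Finset.Icc 1 N, ∫ ω in A, max (g i ω) 0 ∂μ := by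
      rw [hS]
      exact integral_finset_sum _ (fun i _ => ((hC₀ i).1).pos_part.integrableOn)
    have h8 : ∀ i ∈ Finset.Icc 1 N, ∫ ω in A, max (g i ω) 0 ∂μ
        ≤ (N.choose (N - K) : ℝ) * ((1 - F ε) ^ (N - K) * C₀) := by
      intro i _
      set f : Ω → ℝ := fun ω => max (g i ω) 0 with hf
      have hfnn : ∀ ω, 0 ≤ f ω := fun ω => le_max_right _ _
      have hfint : Integrable f μ := ((hC₀ i).1).pos_part
      set 𝒯 := Finset.powersetCard (N - K) ((Finset.Icc 1 N).erase i) with h𝒯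
      set B : Finset ℕ → Set Ω := fun T => ⋂ j ∈ T, {ω' | ε < g j ω'} with hB
      have hBmeas : ∀ T : Finset ℕ, MeasurableSet (B T) := fun T =>
        MeasurableSet.biInter T.countable_toSet
          (fun j _ => measurableSet_lt measurable_const (hmeas j))
      have hiT : ∀ T ∈ 𝒯, i ∉ T := by
        intro T hT hiT'
        have hsub := (Finset.mem_powersetCard.mp hT).1
        exact (Finset.mem_erase.mp (hsub hiT')).1 rfl
      have hTcard : ∀ T ∈ 𝒯, T.card = N - K := fun T hT =>
        (Finset.mem_powersetCard.mp hT).2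
      have hpt : ∀ ω, Set.indicator A f ω ≤ ∑ T ∈ 𝒯, Set.indicator (B T) f ω := by
        intro ω
        by_cases hω : ω ∈ A
        · rw [Set.indicator_of_mem hω]
          have hωA : ¬ K ≤ ((Finset.Icc 1 N).filter (fun j => g j ω ≤ ε)).card := hω
          obtain ⟨T, hT, hTall⟩ := exists_subset_cover g hK1 hKN ε i ω hωA
          have hωB : ω ∈ B T := Set.mem_iInter₂.mpr (fun j hj => hTall j hj)
          calc f ω = Set.indicator (B T) f ω := (Set.indicator_of_mem hωB f).symm
            _ ≤ ∑ T ∈ 𝒯, Set.indicator (B T) f ω :=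
              Finset.single_le_sum (f := fun T => Set.indicator (B T) f ω)
                (fun T _ => Set.indicator_nonneg (fun ω _ => hfnn ω) ω) hT
        · rw [Set.indicator_of_notMem hω]
          exact Finset.sum_nonneg fun T _ => Set.indicator_nonneg (fun ω _ => hfnn ω) ω
      have hindint : ∀ T : Finset ℕ, Integrable (Set.indicator (B T) f) μ :=
        fun T => hfint.indicator (hBmeas T)
      calc ∫ ω in A, f ω ∂μ = ∫ ω, Set.indicator A f ω ∂μ := (integral_indicator hAmeas).symm
        _ ≤ ∫ ω, ∑ T ∈ 𝒯, Set.indicator (B T) f ω ∂μ := by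
            apply integral_mono (hfint.indicator hAmeas)
              (integrable_finset_sum _ (fun T _ => hindint T)) hpt
        _ = ∑ T ∈ 𝒯, ∫ ω, Set.indicator (B T) f ω ∂μ := by
            rw [integral_finset_sum _ (fun T _ => hindint T)]
        _ = ∑ T ∈ 𝒯, ∫ ω in B T, f ω ∂μ := by
            exact Finset.sum_congr rfl (fun T _ => integral_indicator (hBmeas T))
        _ = ∑ T ∈ 𝒯, (1 - F ε) ^ T.card * ∫ ω, f ω ∂μ :=
            Finset.sum_congr rfl (fun T hT =>
              setIntegral_indep μ g hmeas hindep F hcdf ε (hiT T hT) (hC₀ i).1)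
        _ ≤ ∑ _T ∈ 𝒯, (1 - F ε) ^ (N - K) * C₀ := by
            apply Finset.sum_le_sum
            intro T hT
            rw [hTcard T hT]
            exact mul_le_mul_of_nonneg_left (hC₀ i).2 (by positivity)
        _ = (𝒯.card : ℝ) * ((1 - F ε) ^ (N - K) * C₀) := by
            rw [Finset.sum_const, nsmul_eq_mul]
        _ ≤ (N.choose (N - K) : ℝ) * ((1 - F ε) ^ (N - K) * C₀) := by
            apply mul_le_mul_of_nonneg_right _ (by positivity)
            have : 𝒯.card = ((Finset.Icc 1 N).erase i).card.choose (N - K) :=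
              Finset.card_powersetCard _ _
            rw [this]
            have hle : ((Finset.Icc 1 N).erase i).card ≤ N := by
              calc ((Finset.Icc 1 N).erase i).card ≤ (Finset.Icc 1 N).card :=
                    Finset.card_erase_le
                _ = N := hcardIcc
            exact_mod_cast Nat.choose_le_choose (N - K) hle
    calc ∫ ω in A, X ω ∂μ ≤ ∑ i ∈ Finset.Icc 1 N, ∫ ω in A, max (g i ω) 0 ∂μ := by
          rw [← h7]; exact h6
      _ ≤ ∑ _i ∈ Finset.Icc 1 N, (N.choose (N - K) : ℝ) * ((1 - F ε) ^ (N - K) * C₀) :=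
          Finset.sum_le_sum h8
      _ = (N : ℝ) * ((N.choose (N - K) : ℝ) * ((1 - F ε) ^ (N - K) * C₀)) := by
          rw [Finset.sum_const, hcardIcc, nsmul_eq_mul]
      _ = ((N : ℝ) * (N.choose (N - K) : ℝ) * (1 - F ε) ^ (N - K)) * C₀ := by ring
  calc ∫ ω, X ω ∂μ = ∫ ω in A, X ω ∂μ + ∫ ω in Aᶜ, X ω ∂μ := hsplit
    _ ≤ ((N : ℝ) * (N.choose (N - K) : ℝ) * (1 - F ε) ^ (N - K)) * C₀ + ε :=
        add_le_add hb2 hb1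
    _ = ε + ((N : ℝ) * (N.choose (N - K) : ℝ) * (1 - F ε) ^ (N - K)) * C₀ := by ring

end AuxLemmas

/-- For i.i.d. `g i` with class-𝒞 CDF `F` (continuous, strictly increasing with positive
support, double-exponential tail, regularly varying at 0) and `K_N = o(N)`,
`E[g_{K_N:N}] → 0`. -/
theorem expectation_orderStat_tendsto_zero
    {Ω : Type*} [MeasurableSpace Ω] (μ : Measure Ω) [IsProbabilityMeasure μ]
    (g : ℕ → Ω → ℝ) (hmeas : ∀ i, Measurable (g i))
    (hindep : iIndepFun g μ)
    (F : ℝ → ℝ) (hcdf : ∀ i x, (μ {ω | g i ω ≤ x}).toReal = F x)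
    (hFcont : Continuous F) (hFmono : StrictMonoOn F (Set.Ioi 0))
    (hsupp : ∀ x ≤ (0 : ℝ), F x = 0)
    (α β n l : ℝ) (hα : 0 < α) (hβ : 0 < β) (hn : 0 < n)
    (H : ℝ → ℝ)
    (hslow : ∀ a > (0 : ℝ), Tendsto (fun x => H (a * x) / H x) atTop (𝓝 1))
    (hHo : H =o[atTop] fun x => x ^ n)
    (htail : Tendsto
      (fun x => (1 - F x) / (α * x ^ l * Real.exp (-β * x ^ n + H x)))
      atTop (𝓝 1))
    (η γ : ℝ) (hη : 0 < η) (hγ : 0 < γ)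
    (horigin : Tendsto (fun x => F x / (η * x ^ γ)) (𝓝[>] 0) (𝓝 1))
    (K : ℕ → ℕ) (hK : ∀ N, 1 ≤ K N ∧ K N ≤ N)
    (hKo : Tendsto (fun N : ℕ => (K N : ℝ) / N) atTop (𝓝 0)) :
    Tendsto (fun N : ℕ => ∫ ω, orderStat g N (K N) ω ∂μ) atTop (𝓝 0) := by
  have hF0 : F 0 = 0 := hsupp 0 le_rfl
  have htail2 : ∀ᶠ t in atTop, 1 - F t ≤ t ^ (-2 : ℝ) :=
    tail_bound F α β n l hα hβ hn H hHo htail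
  obtain ⟨C₀, hC₀⟩ := integrable_and_bound μ g hmeas F hcdf hF0 htail2
  have hC₀nn : 0 ≤ C₀ :=
    le_trans (integral_nonneg (fun ω => le_max_right _ _)) (hC₀ 0).2
  have hgpos : ∀ i, ∀ᵐ ω ∂μ, 0 < g i ω := fun i => ae_pos g hmeas F hcdf hF0 i
  have hFle1 : ∀ x, F x ≤ 1 := fun x => by
    rw [← hcdf 0 x]
    exact ENNReal.toReal_le_of_le_ofReal zero_le_one (by simpa using prob_le_one)
  have hFpos : ∀ ε : ℝ, 0 < ε → 0 < F ε := by
    intro ε hε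
    have h1 : ∀ᶠ x in 𝓝[>] (0:ℝ), 1/2 < F x / (η * x ^ γ) :=
      horigin.eventually_const_lt (by norm_num)
    have h2 : ∀ᶠ x in 𝓝[>] (0:ℝ), x < ε :=
      (eventually_of_mem (Iio_mem_nhds hε) (fun x hx => hx)).filter_mono nhdsWithin_le_nhds
    have h3 : ∀ᶠ x in 𝓝[>] (0:ℝ), (0:ℝ) < x :=
      eventually_of_mem self_mem_nhdsWithin (fun x hx => hx)
    obtain ⟨x₀, hx1, hx2, hx3⟩ := (h1.and (h2.and h3)).exists
    have hden : 0 < η * x₀ ^ γ := mul_pos hη (Real.rpow_pos_of_pos hx3 γ)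
    have hFx₀ : 0 < F x₀ := by
      have h4 := (lt_div_iff₀ hden).mp hx1
      nlinarith
    have hlt : F x₀ < F ε := hFmono (Set.mem_Ioi.mpr hx3) (Set.mem_Ioi.mpr hε) hx2
    linarith
  apply tendsto_order.2
  constructor
  · intro a ha
    refine Eventually.of_forall fun N => ?_
    have h0 : 0 ≤ ∫ ω, orderStat g N (K N) ω ∂μ := by
      apply integral_nonneg_of_ae
      have hposall : ∀ᵐ ω ∂μ, ∀ i ∈ Finset.Icc 1 N, 0 < g i ω :=
        ae_all_iff.mpr (fun i => by filter_upwards [hgpos i] with ω h _; exact h)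
      filter_upwards [hposall] with ω hω
      exact orderStat_nonneg g (hK N).1 ω hω
    linarith
  · intro b hb
    have hε : (0:ℝ) < b / 2 := half_pos hb
    have hp : 0 < F (b/2) := hFpos (b/2) hε
    have hq0 : 0 ≤ 1 - F (b/2) := by linarith [hFle1 (b/2)]
    have hdecay := decay_to_zero hp hq0 (by ring) K hK hKo
    have hdecayC := hdecay.mul_const C₀
    rw [zero_mul] at hdecayC
    have hev := hdecayC.eventually_lt_const hε
    filter_upwards [hev] with N hN
    calc ∫ ω, orderStat g N (K N) ω ∂μ
        ≤ b/2 + ((N : ℝ) * (N.choose (N - K N) : ℝ) * (1 - F (b/2)) ^ (N - K N)) * C₀ :=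
          main_estimate μ g hmeas hindep F hcdf (hK N).1 (hK N).2 hε (hFle1 (b/2))
            hC₀ hC₀nn hgpos
      _ < b/2 + b/2 := by
          apply add_lt_add_right hN
      _ = b := by ring
end

section
/- Let $X_1,\dots,X_N$ be i.i.d. nonnegative random variables with $\lim_{x\to\infty}\frac{1-F_X(x)}{\xi x^{-\gamma}}=1$ for constants $\xi,\gamma>0$. Let $X^\star_N=\max_i X_i$ and $\tilde{R}(N)=\mathbb{E}[\log(X^\star_N)\mathbf{1}\{X^\star_N\ge 1\}]$. Then $\lim_{N\to\infty}\frac{\tilde{R}(N)}{\frac{1}{\gamma}\log(\xi N)}=1$. -/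
open MeasureTheory ProbabilityTheory Filter Real Set Topology
open scoped ENNReal

lemma one_sub_pow_le' {p : ℝ} (h0 : 0 ≤ p) (N : ℕ) : 1 - p ^ N ≤ N * (1 - p) := by
  have h := one_add_mul_le_pow (a := p - 1) (by linarith) N
  have h2 : (1 + (p - 1)) = p := by ring
  rw [h2] at h
  linarith

lemma expInt {γ : ℝ} (hγ : 0 < γ) (c : ℝ) :
    ∫ x in Ioi c, Real.exp (-γ * x) = Real.exp (-γ * c) / γ := by
  calc ∫ x in Ioi c, Real.exp (-γ * x) = ∫ x in Ioi c, (fun y => Real.exp (-y)) (γ * x) := by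
        simp [neg_mul]
    _ = γ⁻¹ • ∫ x in Ioi (γ * c), (fun y => Real.exp (-y)) x :=
        integral_comp_mul_left_Ioi (fun y => Real.exp (-y)) c hγ
    _ = Real.exp (-γ * c) / γ := by
        simp only []
        rw [integral_exp_neg_Ioi]
        rw [smul_eq_mul, neg_mul]
        ring

lemma expLInt {γ K : ℝ} (hγ : 0 < γ) (hK : 0 ≤ K) (c : ℝ) :
    ∫⁻ t in Ioi c, ENNReal.ofReal (K * Real.exp (-γ * t)) =
      ENNReal.ofReal (K * (Real.exp (-γ * c) / γ)) := by
  rw [← ofReal_integral_eq_lintegral_ofReal]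
  · rw [MeasureTheory.integral_const_mul, expInt hγ]
  · exact (exp_neg_integrableOn_Ioi c hγ).const_mul K
  · exact Filter.Eventually.of_forall fun x => mul_nonneg hK (Real.exp_nonneg _)

set_option maxHeartbeats 2000000 in
lemma analysis_part
    (F : ℝ → ℝ) (hF0 : ∀ x, 0 ≤ F x) (hF1 : ∀ x, F x ≤ 1) (hFmono : Monotone F)
    (ξ γ : ℝ) (hξ : 0 < ξ) (hγ : 0 < γ)
    (htail : Tendsto (fun x => (1 - F x) / (ξ * x ^ (-γ))) atTop (𝓝 1)) :
    Tendsto (fun N : ℕ =>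
      (∫⁻ t in Ioi (0:ℝ), ENNReal.ofReal (1 - F (Real.exp t) ^ N)).toReal /
        ((1 / γ) * Real.log (ξ * N))) atTop (𝓝 1) := by
  set I : ℕ → ℝ≥0∞ := fun N => ∫⁻ t in Ioi (0:ℝ), ENNReal.ofReal (1 - F (Real.exp t) ^ N)
    with hI
  set L : ℕ → ℝ := fun N => (1 / γ) * Real.log (ξ * N) with hLdef
  have hxiNtop : Tendsto (fun N : ℕ => ξ * (N : ℝ)) atTop atTop :=
    (tendsto_const_mul_atTop_of_pos hξ).mpr tendsto_natCast_atTop_atTop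
  have hLtop : Tendsto L atTop atTop :=
    (tendsto_const_mul_atTop_of_pos (by positivity)).mpr
      (Real.tendsto_log_atTop.comp hxiNtop)
  have hrpow_exp : ∀ t : ℝ, (Real.exp t) ^ (-γ) = Real.exp (-γ * t) := by
    intro t
    rw [Real.rpow_def_of_pos (Real.exp_pos t), Real.log_exp]
    ring_nf
  have key : ∀ ε : ℝ, 0 < ε → ε < 1/2 →
      ∀ᶠ N : ℕ in atTop, |(I N).toReal / L N - 1| ≤ 2 * ε := by
    intro ε hε hε2
    have h1ε : (0:ℝ) < 1 - ε := by linarith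
    -- tail bounds
    have htb : ∀ᶠ x in atTop, ((1 - ε) * (ξ * x ^ (-γ)) ≤ 1 - F x ∧
        1 - F x ≤ (1 + ε) * (ξ * x ^ (-γ))) := by
      have h1 : ∀ᶠ x in atTop, (1 - F x) / (ξ * x ^ (-γ)) ∈ Icc (1 - ε) (1 + ε) :=
        htail (Icc_mem_nhds (by linarith) (by linarith))
      filter_upwards [h1, eventually_gt_atTop (0:ℝ)] with x hx hx0
      have hD : 0 < ξ * x ^ (-γ) := by positivity
      constructor
      · have h2 := hx.1
        rw [le_div_iff₀ hD] at h2
        linarith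
      · have h2 := hx.2
        rw [div_le_iff₀ hD] at h2
        linarith
    obtain ⟨a, ha⟩ := eventually_atTop.mp htb
    set x₀ : ℝ := max a 1 with hx₀def
    have hx₀1 : (1:ℝ) ≤ x₀ := le_max_right _ _
    have hx₀ : ∀ x, x₀ ≤ x → ((1 - ε) * (ξ * x ^ (-γ)) ≤ 1 - F x ∧
        1 - F x ≤ (1 + ε) * (ξ * x ^ (-γ))) :=
      fun x hx => ha x (le_trans (le_max_left _ _) hx)
    set b₀ : ℝ := max (Real.log x₀) 1 with hb₀def
    -- r and d sequences
    have hr0 : Tendsto (fun N : ℕ => ((1 + ε)/γ) * (ξ * N) ^ (-ε)) atTop (𝓝 0) := by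
      have h := (tendsto_rpow_neg_atTop hε).comp hxiNtop
      have := h.const_mul ((1 + ε)/γ)
      simpa using this
    have hd0 : Tendsto (fun N : ℕ => Real.exp (-((1 - ε) * (ξ * N) ^ ε))) atTop (𝓝 0) := by
      have h := (tendsto_rpow_atTop hε).comp hxiNtop
      have h2 := (tendsto_const_mul_atTop_of_pos h1ε).mpr h
      exact Real.tendsto_exp_atBot.comp (tendsto_neg_atTop_atBot.comp h2)
    filter_upwards [eventually_ge_atTop 1, hLtop.eventually_ge_atTop (b₀ / (1 - ε)),
      hLtop.eventually_ge_atTop 1, hr0.eventually (Iio_mem_nhds hε),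
      hd0.eventually (Iio_mem_nhds hε)]
      with N hN1 hLb hL1 hrε' hdε'
    have hrε : ((1 + ε)/γ) * (ξ * N) ^ (-ε) ≤ ε := le_of_lt hrε'
    have hdε : Real.exp (-((1 - ε) * (ξ * N) ^ ε)) ≤ ε := le_of_lt hdε'
    have hN1' : (1:ℝ) ≤ (N : ℝ) := by exact_mod_cast hN1
    have hξN : (0:ℝ) < ξ * N := by positivity
    have hL0 : 0 < L N := lt_of_lt_of_le (by positivity) hLb
    have hb₀L : b₀ ≤ (1 - ε) * L N := by
      rw [div_le_iff₀ h1ε] at hLb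
      linarith
    have hcx : Real.log x₀ ≤ (1 - ε) * L N := le_trans (le_max_left _ _) hb₀L
    set c' : ℝ := (1 - ε) * L N with hc'
    set c : ℝ := (1 + ε) * L N with hc
    have hc'pos : 0 < c' := by positivity
    have hcpos : 0 < c := by positivity
    have hc'c : c' ≤ c := by nlinarith
    have hexp : ∀ s : ℝ, Real.exp (-γ * (s * L N)) = (ξ * N) ^ (-s) := by
      intro s
      rw [Real.rpow_def_of_pos hξN]
      congr 1
      rw [hLdef]
      field_simp
    -- Upper bound
    have hIub : I N ≤ ENNReal.ofReal c + ENNReal.ofReal (((1 + ε)/γ) * (ξ * N) ^ (-ε)) := by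
      have hsplit : I N = (∫⁻ t in Ioc 0 c, ENNReal.ofReal (1 - F (Real.exp t) ^ N))
          + (∫⁻ t in Ioi c, ENNReal.ofReal (1 - F (Real.exp t) ^ N)) := by
        rw [hI]
        simp only []
        rw [← Ioc_union_Ioi_eq_Ioi hcpos.le,
          lintegral_union measurableSet_Ioi Ioc_disjoint_Ioi_same]
      rw [hsplit]
      refine add_le_add ?_ ?_
      · calc (∫⁻ t in Ioc 0 c, ENNReal.ofReal (1 - F (Real.exp t) ^ N))
            ≤ ∫⁻ _ in Ioc (0:ℝ) c, 1 := by
              apply setLIntegral_mono' measurableSet_Ioc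
              intro t _
              exact ENNReal.ofReal_le_one.mpr (by nlinarith [pow_nonneg (hF0 (Real.exp t)) N])
          _ = ENNReal.ofReal c := by
              rw [setLIntegral_const, one_mul, Real.volume_Ioc, sub_zero]
      · calc (∫⁻ t in Ioi c, ENNReal.ofReal (1 - F (Real.exp t) ^ N))
            ≤ ∫⁻ t in Ioi c, ENNReal.ofReal ((N * ((1 + ε) * ξ)) * Real.exp (-γ * t)) := by
              apply setLIntegral_mono' measurableSet_Ioi
              intro t ht
              apply ENNReal.ofReal_le_ofReal
              have hxt : x₀ ≤ Real.exp t := by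
                have h1 : Real.exp (Real.log x₀) ≤ Real.exp t :=
                  Real.exp_le_exp.mpr (le_trans hcx (le_trans hc'c (le_of_lt ht)))
                rwa [Real.exp_log (by linarith : (0:ℝ) < x₀)] at h1
              have htail_t := (hx₀ _ hxt).2
              calc 1 - F (Real.exp t) ^ N ≤ N * (1 - F (Real.exp t)) :=
                    one_sub_pow_le' (hF0 _) N
                _ ≤ N * ((1 + ε) * (ξ * (Real.exp t) ^ (-γ))) :=
                    mul_le_mul_of_nonneg_left htail_t (Nat.cast_nonneg N)
                _ = (N * ((1 + ε) * ξ)) * Real.exp (-γ * t) := by rw [hrpow_exp t]; ring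
          _ = ENNReal.ofReal ((N * ((1 + ε) * ξ)) * (Real.exp (-γ * c) / γ)) :=
              expLInt hγ (by positivity) c
          _ = ENNReal.ofReal (((1 + ε)/γ) * (ξ * N) ^ (-ε)) := by
              congr 1
              rw [hc, hexp (1 + ε)]
              have h3 : (ξ * N) * (ξ * N) ^ (-(1 + ε)) = (ξ * N) ^ (-ε) := by
                have h4 := Real.rpow_add hξN 1 (-(1 + ε))
                rw [Real.rpow_one] at h4
                rw [← h4]
                congr 1
                ring
              rw [← h3]
              ring
    have hI_ne : I N ≠ ⊤ :=
      ne_top_of_le_ne_top (ENNReal.add_ne_top.mpr ⟨ENNReal.ofReal_ne_top,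
        ENNReal.ofReal_ne_top⟩) hIub
    have hub : (I N).toReal ≤ c + ((1 + ε)/γ) * (ξ * N) ^ (-ε) := by
      have h := ENNReal.toReal_mono (ENNReal.add_ne_top.mpr ⟨ENNReal.ofReal_ne_top,
        ENNReal.ofReal_ne_top⟩) hIub
      rwa [ENNReal.toReal_add ENNReal.ofReal_ne_top ENNReal.ofReal_ne_top,
        ENNReal.toReal_ofReal hcpos.le, ENNReal.toReal_ofReal (by positivity)] at h
    -- Lower bound
    set d : ℝ := Real.exp (-((1 - ε) * (ξ * N) ^ ε)) with hd
    have hd_pos : 0 < d := Real.exp_pos _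
    have hd1 : d ≤ 1 := by
      rw [hd, Real.exp_le_one_iff]
      have : (0:ℝ) ≤ (ξ * N) ^ ε := Real.rpow_nonneg hξN.le ε
      nlinarith
    have hexpc' : x₀ ≤ Real.exp c' := by
      have h1 : Real.exp (Real.log x₀) ≤ Real.exp c' := Real.exp_le_exp.mpr hcx
      rwa [Real.exp_log (by linarith : (0:ℝ) < x₀)] at h1
    set u : ℝ := (1 - ε) * (ξ * Real.exp (-γ * c')) with hu
    have hub1 := (hx₀ _ hexpc').1
    rw [hrpow_exp] at hub1
    have hu0 : 0 ≤ u := by positivity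
    have huF : F (Real.exp c') ≤ 1 - u := by rw [hu]; linarith
    have hNu : (N : ℝ) * u = (1 - ε) * (ξ * N) ^ ε := by
      rw [hu, hc', hexp (1 - ε)]
      have h3 : (ξ * N) * (ξ * N) ^ (-(1 - ε)) = (ξ * N) ^ ε := by
        have h4 := Real.rpow_add hξN 1 (-(1 - ε))
        rw [Real.rpow_one] at h4
        rw [← h4]
        congr 1
        ring
      rw [← h3]
      ring
    have hlb' : ENNReal.ofReal (1 - d) * ENNReal.ofReal c' ≤ I N := by
      calc ENNReal.ofReal (1 - d) * ENNReal.ofReal c'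
          = ∫⁻ _ in Ioc (0:ℝ) c', ENNReal.ofReal (1 - d) := by
            rw [setLIntegral_const, Real.volume_Ioc, sub_zero]
        _ ≤ ∫⁻ t in Ioc (0:ℝ) c', ENNReal.ofReal (1 - F (Real.exp t) ^ N) := by
            apply setLIntegral_mono' measurableSet_Ioc
            intro t ht
            apply ENNReal.ofReal_le_ofReal
            have hmono : F (Real.exp t) ≤ F (Real.exp c') := hFmono (Real.exp_le_exp.mpr ht.2)
            have hpow : F (Real.exp t) ^ N ≤ (1 - u) ^ N :=
              pow_le_pow_left₀ (hF0 _) (le_trans hmono huF) N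
            have hexpb : (1 - u) ^ N ≤ Real.exp (-((N : ℝ) * u)) := by
              have h1 : 1 - u ≤ Real.exp (-u) := by
                have := Real.add_one_le_exp (-u)
                linarith
              calc (1 - u) ^ N ≤ (Real.exp (-u)) ^ N := by
                    apply pow_le_pow_left₀ (by nlinarith [hF0 (Real.exp c'), hF1 (Real.exp c')]) h1 N
                _ = Real.exp (-((N : ℝ) * u)) := by
                    rw [← Real.exp_nat_mul]
                    congr 1
                    ring
            have hdd : d = Real.exp (-((N:ℝ) * u)) := by rw [hd, hNu]
            rw [hdd]
            linarith
        _ ≤ I N := lintegral_mono_set Ioc_subset_Ioi_self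
    have hlb : (1 - d) * c' ≤ (I N).toReal := by
      have h := ENNReal.toReal_mono hI_ne hlb'
      rwa [ENNReal.toReal_mul, ENNReal.toReal_ofReal (by linarith),
        ENNReal.toReal_ofReal hc'pos.le] at h
    -- conclude
    rw [abs_le]
    constructor
    · have h5 : (1 - 2*ε) * L N ≤ (I N).toReal := by nlinarith
      have h6 : 1 - 2*ε ≤ (I N).toReal / L N := (le_div_iff₀ hL0).mpr (by linarith [h5])
      linarith
    · have h5 : (I N).toReal ≤ (1 + 2*ε) * L N := by nlinarith
      have h6 : (I N).toReal / L N ≤ 1 + 2*ε := (div_le_iff₀ hL0).mpr (by linarith [h5])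
      linarith
  -- wrap up
  rw [Metric.tendsto_atTop]
  intro δ hδ
  have hε : (0:ℝ) < min (δ/3) (1/4) := by positivity
  have hε2 : min (δ/3) (1/4) < 1/2 := lt_of_le_of_lt (min_le_right _ _) (by norm_num)
  obtain ⟨N₀, hN₀⟩ := eventually_atTop.mp (key _ hε hε2)
  refine ⟨N₀, fun n hn => ?_⟩
  have h := hN₀ n hn
  rw [Real.dist_eq]
  show |(I n).toReal / L n - 1| < δ
  calc |(I n).toReal / L n - 1| ≤ 2 * min (δ/3) (1/4) := h
    _ ≤ 2 * (δ/3) := by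
        have := min_le_left (δ/3) (1/4)
        linarith
    _ < δ := by linarith

theorem structural
    {Ω : Type*} [MeasurableSpace Ω] (μ : Measure Ω) [IsProbabilityMeasure μ]
    (X : ℕ → Ω → ℝ) (hmeas : ∀ i, Measurable (X i)) (hnn : ∀ i ω, 0 ≤ X i ω)
    (hindep : iIndepFun X μ)
    (F : ℝ → ℝ) (hcdf : ∀ i x, (μ {ω | X i ω ≤ x}).toReal = F x)
    (N : ℕ) (hN : 1 ≤ N) :
    (∫ ω, (if 1 ≤ maxOver X N ω then Real.log (maxOver X N ω) else 0) ∂μ) =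
      (∫⁻ t in Ioi (0:ℝ), ENNReal.ofReal (1 - F (Real.exp t) ^ N)).toReal := by
  have hne : (Finset.Icc 1 N).Nonempty := ⟨1, Finset.mem_Icc.mpr ⟨le_rfl, hN⟩⟩
  have hM_sup' : ∀ ω, maxOver X N ω = (Finset.Icc 1 N).sup' hne (fun i => X i ω) := by
    intro ω
    rw [Finset.sup'_eq_csSup_image, Finset.coe_Icc]
    rfl
  have hMmeas : Measurable (maxOver X N) := by
    have : maxOver X N = (Finset.Icc 1 N).sup' hne X := by
      funext ω
      rw [hM_sup' ω, Finset.sup'_apply]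
    rw [this]
    exact Finset.measurable_sup' hne (fun i _ => hmeas i)
  have hMnn : ∀ ω, 0 ≤ maxOver X N ω := by
    intro ω
    rw [hM_sup' ω]
    exact le_trans (hnn 1 ω) (Finset.le_sup' (fun i => X i ω) (Finset.mem_Icc.mpr ⟨le_rfl, hN⟩))
  have hF0 : ∀ x, 0 ≤ F x := fun x => (hcdf 0 x) ▸ ENNReal.toReal_nonneg
  have hXcdf : ∀ (i : ℕ) (x : ℝ), μ (X i ⁻¹' Iic x) = ENNReal.ofReal (F x) := by
    intro i x
    rw [← hcdf i x, ENNReal.ofReal_toReal (measure_ne_top μ _)]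
    rfl
  have hMcdf : ∀ x : ℝ, μ {ω | maxOver X N ω ≤ x} = ENNReal.ofReal (F x ^ N) := by
    intro x
    have hset : {ω | maxOver X N ω ≤ x} = ⋂ i ∈ Finset.Icc 1 N, X i ⁻¹' Iic x := by
      ext ω
      simp only [mem_setOf_eq, hM_sup' ω, Finset.sup'_le_iff, Set.mem_iInter, mem_preimage,
        mem_Iic]
    rw [hset, hindep.measure_inter_preimage_eq_mul (Finset.Icc 1 N)
      (fun i _ => measurableSet_Iic)]
    rw [Finset.prod_congr rfl (fun i _ => hXcdf i x), Finset.prod_const, Nat.card_Icc,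
      ENNReal.ofReal_pow (hF0 x)]
    simp
  have hMtail : ∀ x : ℝ, μ {ω | x < maxOver X N ω} = ENNReal.ofReal (1 - F x ^ N) := by
    intro x
    have hsm : MeasurableSet {ω | maxOver X N ω ≤ x} :=
      measurableSet_le hMmeas measurable_const
    have hcompl : {ω | x < maxOver X N ω} = {ω | maxOver X N ω ≤ x}ᶜ := by
      ext ω; simp [not_le]
    rw [hcompl, measure_compl hsm (measure_ne_top μ _), hMcdf x, measure_univ,
      ENNReal.ofReal_sub 1 (pow_nonneg (hF0 x) N), ENNReal.ofReal_one]
  set f : Ω → ℝ := fun ω => max (Real.log (maxOver X N ω)) 0 with hf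
  have hfi : ∀ ω, (if 1 ≤ maxOver X N ω then Real.log (maxOver X N ω) else 0) = f ω := by
    intro ω
    by_cases h : 1 ≤ maxOver X N ω
    · simp [hf, h, max_eq_left (Real.log_nonneg h)]
    · simp [hf, h, max_eq_right (Real.log_nonpos (hMnn ω) (le_of_not_ge h))]
  have hfmeas : Measurable f := (Real.measurable_log.comp hMmeas).max measurable_const
  have hfnn : 0 ≤ᵐ[μ] f := Filter.Eventually.of_forall fun ω => le_max_right _ _
  calc (∫ ω, (if 1 ≤ maxOver X N ω then Real.log (maxOver X N ω) else 0) ∂μ)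
      = ∫ ω, f ω ∂μ := by simp only [hfi]
    _ = (∫⁻ ω, ENNReal.ofReal (f ω) ∂μ).toReal :=
        integral_eq_lintegral_of_nonneg_ae hfnn hfmeas.aestronglyMeasurable
    _ = (∫⁻ t in Ioi (0:ℝ), μ {ω | t < f ω}).toReal := by
        rw [lintegral_eq_lintegral_meas_lt μ hfnn hfmeas.aemeasurable]
    _ = (∫⁻ t in Ioi (0:ℝ), ENNReal.ofReal (1 - F (Real.exp t) ^ N)).toReal := by
        congr 1
        apply setLIntegral_congr_fun measurableSet_Ioi
        intro t (ht : (0:ℝ) < t)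
        dsimp only
        have hset : {ω | t < f ω} = {ω | Real.exp t < maxOver X N ω} := by
          ext ω
          have hM0 := hMnn ω
          simp only [mem_setOf_eq, hf, lt_max_iff, or_iff_left (not_lt.mpr (le_of_lt ht))]
          rcases hM0.eq_or_lt with he | hpos
          · rw [← he]
            simp [Real.log_zero, not_lt.mpr (le_of_lt ht), not_lt.mpr (Real.exp_nonneg t)]
          · exact Real.lt_log_iff_exp_lt hpos
        rw [hset, hMtail]


/-- For i.i.d. nonnegative `X i` with Pareto-type tail `1 - F_X(x) ~ ξ x^(-γ)`,
the truncated expected log of the maximum satisfies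
`E[log(X*_N) 1{X*_N ≥ 1}] / ((1/γ) log(ξ N)) → 1`. -/
theorem truncated_log_max_scaling_pareto
    {Ω : Type*} [MeasurableSpace Ω] (μ : Measure Ω) [IsProbabilityMeasure μ]
    (X : ℕ → Ω → ℝ) (hmeas : ∀ i, Measurable (X i)) (hnn : ∀ i ω, 0 ≤ X i ω)
    (hindep : iIndepFun X μ)
    (F : ℝ → ℝ) (hcdf : ∀ i x, (μ {ω | X i ω ≤ x}).toReal = F x)
    (ξ γ : ℝ) (hξ : 0 < ξ) (hγ : 0 < γ)
    (htail : Tendsto (fun x => (1 - F x) / (ξ * x ^ (-γ))) atTop (𝓝 1)) :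
    Tendsto (fun N : ℕ =>
      (∫ ω, (if 1 ≤ maxOver X N ω then Real.log (maxOver X N ω) else 0) ∂μ) /
        ((1 / γ) * Real.log (ξ * N)))
      atTop (𝓝 1) := by
  have hF0 : ∀ x, 0 ≤ F x := fun x => (hcdf 0 x) ▸ ENNReal.toReal_nonneg
  have hF1 : ∀ x, F x ≤ 1 := by
    intro x
    rw [← hcdf 0 x]
    have := ENNReal.toReal_mono ENNReal.one_ne_top
      (prob_le_one : μ {ω | X 0 ω ≤ x} ≤ 1)
    simpa using this
  have hFmono : Monotone F := by
    intro x y hxy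
    rw [← hcdf 0 x, ← hcdf 0 y]
    exact ENNReal.toReal_mono (measure_ne_top μ _)
      (measure_mono (fun ω h => le_trans h hxy))
  have h := analysis_part F hF0 hF1 hFmono ξ γ hξ hγ htail
  apply h.congr'
  filter_upwards [eventually_ge_atTop 1] with N hN
  rw [structural μ X hmeas hnn hindep F hcdf N hN]
end

section
/- Let $X_1,\dots,X_N$ be i.i.d. nonnegative random variables with Pareto-type tail $\lim_{x\to\infty}(1-F_X(x))/(\xi x^{-\gamma})=1$, $\xi,\gamma>0$, let $X^\star_N=\max_i X_i$ and $\tilde{X}_N=\frac{\log X^\star_N}{\frac{1}{\gamma}\log(\xi N)}\mathbf{1}\{X^\star_N\ge 1\}$. Then for all $\epsilon_1,\epsilon_2>0$ there exist constants $N_0, C_0$ such that for all $C\ge C_0$, $\sup_{N\ge N_0}\mathbb{E}[\tilde{X}_N\mathbf{1}\{\tilde{X}_N>C\}]\le C(1+\epsilon_1)(1+\epsilon_2)\frac{\xi N_0}{(\xi N_0)^{C}}\sum_{i=0}^{\infty}\frac{i+2}{(\xi N_0)^{iC}}$; in particular the family $\{\tilde{X}_N\}_{N\ge 1}$ is uniformly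 integrable. -/
open MeasureTheory ProbabilityTheory Filter Real Set Topology

/-- The normalized truncated log-maximum
`X̃_N = (log X*_N / ((1/γ) log(ξ N))) 1{X*_N ≥ 1}`. -/
noncomputable def normLogMax {Ω : Type*} (X : ℕ → Ω → ℝ) (ξ γ : ℝ) (N : ℕ) (ω : Ω) : ℝ :=
  if 1 ≤ maxOver X N ω then
    Real.log (maxOver X N ω) / ((1 / γ) * Real.log (ξ * N)) else 0

lemma measurable_maxOver {Ω : Type*} [MeasurableSpace Ω] (X : ℕ → Ω → ℝ)
    (hmeas : ∀ i, Measurable (X i)) (N : ℕ) : Measurable (maxOver X N) := by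
  rcases Nat.eq_zero_or_pos N with h | h
  · subst h
    have : maxOver X 0 = fun _ => (0:ℝ) := by
      funext ω; simp [maxOver, Real.sSup_empty]
    rw [this]; exact measurable_const
  · have hne : (Finset.Icc 1 N).Nonempty := ⟨1, Finset.mem_Icc.mpr ⟨le_refl 1, h⟩⟩
    have heq : maxOver X N = fun ω => (Finset.Icc 1 N).sup' hne (fun i => X i ω) := by
      funext ω
      rw [maxOver, ← Finset.coe_Icc, ← Finset.sup'_eq_csSup_image]
    rw [heq]
    have h2 := Finset.measurable_sup' hne (f := fun i => X i)
      (fun n _ => hmeas n)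
    convert h2 using 1
    funext ω
    simp [Finset.sup'_apply]

lemma measurable_normLogMax {Ω : Type*} [MeasurableSpace Ω] (X : ℕ → Ω → ℝ)
    (hmeas : ∀ i, Measurable (X i)) (ξ γ : ℝ) (N : ℕ) :
    Measurable (normLogMax X ξ γ N) := by
  unfold normLogMax
  have hM := measurable_maxOver X hmeas N
  exact Measurable.ite (measurableSet_le measurable_const hM)
    ((Real.measurable_log.comp hM).div_const _) measurable_const

lemma maxOver_gt_subset {Ω : Type*} (X : ℕ → Ω → ℝ) (N : ℕ) {t : ℝ} (ht : 0 < t) :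
    {ω | t < maxOver X N ω} ⊆ ⋃ i ∈ Finset.Icc 1 N, {ω | t < X i ω} := by
  intro ω hω
  simp only [Set.mem_setOf_eq] at hω
  by_cases hne : ((fun i => X i ω) '' Set.Icc 1 N).Nonempty
  · obtain ⟨x, ⟨i, hi, rfl⟩, hx⟩ := exists_lt_of_lt_csSup hne hω
    exact Set.mem_biUnion (Finset.mem_Icc.mpr (Set.mem_Icc.mp hi)) hx
  · exfalso
    rw [Set.not_nonempty_iff_eq_empty] at hne
    rw [maxOver, hne, Real.sSup_empty] at hω; linarith

lemma measure_gt_eq {Ω : Type*} [MeasurableSpace Ω] (μ : Measure Ω) [IsProbabilityMeasure μ]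
    (Y : Ω → ℝ) (hY : Measurable Y) (F : ℝ → ℝ)
    (hc : ∀ x, (μ {ω | Y ω ≤ x}).toReal = F x) (t : ℝ) :
    μ {ω | t < Y ω} = ENNReal.ofReal (1 - F t) := by
  have hms : MeasurableSet {ω | Y ω ≤ t} := hY measurableSet_Iic
  have hcompl : {ω | t < Y ω} = {ω | Y ω ≤ t}ᶜ := by ext ω; simp [not_le]
  have h1 : μ {ω | Y ω ≤ t} = ENNReal.ofReal (F t) := by
    rw [← hc t, ENNReal.ofReal_toReal (measure_ne_top μ _)]
  have hF0 : 0 ≤ F t := by rw [← hc t]; exact ENNReal.toReal_nonneg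
  rw [hcompl, measure_compl hms (measure_ne_top μ _), measure_univ, h1,
    ENNReal.ofReal_sub _ hF0, ENNReal.ofReal_one]

lemma exists_layer {C z : ℝ} (hC : 0 < C) (hz : C < z) :
    ∃ i : ℕ, ((i:ℝ)+1)*C < z ∧ z ≤ ((i:ℝ)+2)*C := by
  set m := ⌊z / C⌋₊ with hm
  have h1 : 1 < z / C := (one_lt_div hC).mpr hz
  have hm1 : 1 ≤ m := Nat.le_floor (by exact_mod_cast h1.le)
  have hfl : (m:ℝ) ≤ z / C := Nat.floor_le (by positivity)
  have hfu : z / C < m + 1 := Nat.lt_floor_add_one _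
  have hmu : z < ((m:ℝ)+1) * C := by rw [div_lt_iff₀ hC] at hfu; linarith
  have hml : (m:ℝ) * C ≤ z := by rw [le_div_iff₀ hC] at hfl; linarith
  rcases lt_or_eq_of_le hml with h | h
  · refine ⟨m - 1, ?_, ?_⟩ <;>
    · have hcast : ((m - 1 : ℕ):ℝ) = (m:ℝ) - 1 := by
        rw [Nat.cast_sub hm1]; norm_num
      rw [hcast]; nlinarith
  · have hm2 : 2 ≤ m := by
      by_contra hc
      push_neg at hc
      interval_cases m
      · simp at h; nlinarith
    refine ⟨m - 2, ?_, ?_⟩ <;>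
    · have hcast : ((m - 2 : ℕ):ℝ) = (m:ℝ) - 2 := by
        rw [Nat.cast_sub hm2]; norm_num
      have hm2' : (2:ℝ) ≤ (m:ℝ) := by exact_mod_cast hm2
      rw [hcast]; nlinarith

lemma summable_geom2 {r : ℝ} (h0 : 0 ≤ r) (h1 : r < 1) :
    Summable (fun i : ℕ => ((i:ℝ)+2) * r^i) := by
  have h := summable_pow_mul_geometric_of_norm_lt_one 1 (r := r)
    (by rwa [Real.norm_eq_abs, abs_of_nonneg h0])
  have h2 := summable_geometric_of_lt_one h0 h1
  have h3 := h.add (h2.mul_left 2)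
  refine h3.congr fun i => ?_
  push_cast; ring

lemma rpow_split {b C : ℝ} (hb : 0 < b) (i : ℕ) :
    b ^ (1 - ((i:ℝ)+1)*C) = b * b^(-C) * (b^(-C))^i := by
  have h1 : (b^(-C))^(i:ℕ) = b^((-C)*(i:ℝ)) := by
    rw [← Real.rpow_natCast (b^(-C)) i, ← Real.rpow_mul hb.le]
  rw [h1]
  nth_rewrite 2 [show b = b^(1:ℝ) from (Real.rpow_one b).symm]
  rw [← Real.rpow_add hb, ← Real.rpow_add hb]
  congr 1; ring

lemma tendsto_mul_rpow_neg {b : ℝ} (hb : 1 < b) :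
    Tendsto (fun C : ℝ => C * b ^ (-C)) atTop (𝓝 0) := by
  have hb0 : (0:ℝ) < b := lt_trans one_pos hb
  have hlb : 0 < Real.log b := Real.log_pos hb
  have h1 : Tendsto (fun y : ℝ => y * Real.exp (-y)) atTop (𝓝 0) := by
    simpa using Real.tendsto_pow_mul_exp_neg_atTop_nhds_zero 1
  have h2 : Tendsto (fun C : ℝ => C * Real.log b) atTop atTop :=
    Tendsto.atTop_mul_const hlb tendsto_id
  have h3 := (h1.comp h2).const_mul (1/Real.log b)
  rw [mul_zero] at h3
  refine h3.congr fun C => ?_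
  simp only [Function.comp_apply]
  rw [Real.rpow_def_of_pos hb0]
  field_simp

lemma core_bound {Ω : Type*} [MeasurableSpace Ω] (μ : Measure Ω) [IsProbabilityMeasure μ]
    (X : ℕ → Ω → ℝ) (hmeas : ∀ i, Measurable (X i))
    (F : ℝ → ℝ) (hcdf : ∀ i x, (μ {ω | X i ω ≤ x}).toReal = F x)
    (ξ γ : ℝ) (hξ : 0 < ξ) (hγ : 0 < γ)
    (ε₁ x₀ : ℝ) (hε₁ : 0 ≤ ε₁) (hx₀ : 1 ≤ x₀)
    (htb : ∀ x, x₀ ≤ x → 1 - F x ≤ (1+ε₁) * (ξ * x ^ (-γ)))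
    (N : ℕ) (b₀ : ℝ) (hb₀ : 1 < b₀) (hb : b₀ ≤ ξ * N)
    (C : ℝ) (hC : 1 ≤ C)
    (hth : x₀ ≤ Real.exp (C * ((1/γ) * Real.log (ξ * N)))) :
    (∫ ω, (if C < normLogMax X ξ γ N ω then normLogMax X ξ γ N ω else 0) ∂μ) ≤
      ∑' i : ℕ, (((i:ℝ)+2) * C * ((1+ε₁) * b₀ ^ (1 - ((i:ℝ)+1)*C))) := by
  have hb₀0 : (0:ℝ) < b₀ := lt_trans one_pos hb₀
  set b : ℝ := ξ * N with hbdef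
  have hb1 : 1 < b := lt_of_lt_of_le hb₀ hb
  have hb0 : (0:ℝ) < b := lt_trans one_pos hb1
  have hlogb : 0 < Real.log b := Real.log_pos hb1
  set d : ℝ := (1/γ) * Real.log b with hd
  have hd0 : 0 < d := by positivity
  set Z := normLogMax X ξ γ N with hZ
  have hZmeas : Measurable Z := measurable_normLogMax X hmeas ξ γ N
  set f : Ω → ℝ := fun ω => if C < Z ω then Z ω else 0 with hf
  have hfmeas : Measurable f :=
    Measurable.ite (measurableSet_lt measurable_const hZmeas) hZmeas measurable_const
  have hfnn : ∀ ω, 0 ≤ f ω := by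
    intro ω
    simp only [hf]
    split_ifs with h
    · linarith
    · exact le_refl 0
  -- event identity
  have hevent : ∀ C' : ℝ, 0 < C' →
      {ω | C' < Z ω} = {ω | Real.exp (C' * d) < maxOver X N ω} := by
    intro C' hC'
    ext ω
    simp only [Set.mem_setOf_eq, hZ, normLogMax, ← hbdef, ← hd]
    constructor
    · intro h
      by_cases h1 : 1 ≤ maxOver X N ω
      · rw [if_pos h1] at h
        have h2 : C' * d < Real.log (maxOver X N ω) := by
          rw [lt_div_iff₀ hd0] at h; linarith
        calc Real.exp (C' * d) < Real.exp (Real.log (maxOver X N ω)) :=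
              Real.exp_lt_exp.mpr h2
          _ = maxOver X N ω := Real.exp_log (by linarith)
      · rw [if_neg h1] at h; linarith
    · intro h
      have hM1 : 1 ≤ maxOver X N ω :=
        le_trans (Real.one_le_exp (by positivity)) h.le
      rw [if_pos hM1, lt_div_iff₀ hd0]
      calc C' * d = Real.log (Real.exp (C' * d)) := (Real.log_exp _).symm
        _ < Real.log (maxOver X N ω) := Real.log_lt_log (Real.exp_pos _) h
  set S : ℕ → Set Ω := fun i => {ω | ((i:ℝ)+1)*C < Z ω} with hS
  have hSmeas : ∀ i, MeasurableSet (S i) :=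
    fun i => measurableSet_lt measurable_const hZmeas
  -- measure bound
  have hμS : ∀ i : ℕ, μ (S i) ≤ ENNReal.ofReal ((1+ε₁) * b₀ ^ (1 - ((i:ℝ)+1)*C)) := by
    intro i
    have hC'pos : (0:ℝ) < ((i:ℝ)+1)*C := by positivity
    set t := Real.exp ((((i:ℝ)+1)*C) * d) with hts
    have ht1 : x₀ ≤ t := by
      refine le_trans hth (Real.exp_le_exp.mpr ?_)
      have h0 : (0:ℝ) ≤ (i:ℝ) * (C * d) := by positivity
      nlinarith [h0]
    have ht0 : 0 < t := Real.exp_pos _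
    have hsub : S i ⊆ ⋃ j ∈ Finset.Icc 1 N, {ω | t < X j ω} := by
      rw [hS]
      simp only
      rw [hevent _ hC'pos]
      exact maxOver_gt_subset X N ht0
    have htpow : (N:ℝ) * ((1+ε₁) * (ξ * t ^ (-γ))) = (1+ε₁) * b ^ (1 - ((i:ℝ)+1)*C) := by
      have h1 : t ^ (-γ) = Real.exp (-((((i:ℝ)+1)*C) * Real.log b)) := by
        rw [hts, ← Real.exp_mul]
        congr 1
        rw [hd]
        field_simp
      have h2 : b * t ^ (-γ) = b ^ (1 - ((i:ℝ)+1)*C) := by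
        rw [h1, Real.rpow_def_of_pos hb0]
        nth_rewrite 1 [show b = Real.exp (Real.log b) from (Real.exp_log hb0).symm]
        rw [← Real.exp_add]
        congr 1
        ring
      calc (N:ℝ) * ((1+ε₁) * (ξ * t ^ (-γ))) = (1+ε₁) * (b * t ^ (-γ)) := by
            rw [hbdef]; ring
        _ = (1+ε₁) * b ^ (1 - ((i:ℝ)+1)*C) := by rw [h2]
    calc μ (S i) ≤ μ (⋃ j ∈ Finset.Icc 1 N, {ω | t < X j ω}) := measure_mono hsub
      _ ≤ ∑ j ∈ Finset.Icc 1 N, μ {ω | t < X j ω} := measure_biUnion_finset_le _ _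
      _ = ∑ j ∈ Finset.Icc 1 N, ENNReal.ofReal (1 - F t) :=
          Finset.sum_congr rfl fun j _ => measure_gt_eq μ (X j) (hmeas j) F (hcdf j) t
      _ = (N : ENNReal) * ENNReal.ofReal (1 - F t) := by
          rw [Finset.sum_const, Nat.card_Icc]; simp [nsmul_eq_mul]
      _ ≤ (N : ENNReal) * ENNReal.ofReal ((1+ε₁) * (ξ * t ^ (-γ))) := by
          gcongr
          exact htb t ht1
      _ = ENNReal.ofReal ((N:ℝ) * ((1+ε₁) * (ξ * t ^ (-γ)))) := by
          rw [ENNReal.ofReal_mul (Nat.cast_nonneg N), ENNReal.ofReal_natCast]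
      _ ≤ ENNReal.ofReal ((1+ε₁) * b₀ ^ (1 - ((i:ℝ)+1)*C)) := by
          apply ENNReal.ofReal_le_ofReal
          rw [htpow]
          have hexp : 1 - ((i:ℝ)+1)*C ≤ 0 := by nlinarith [Nat.cast_nonneg (α := ℝ) i]
          have := Real.rpow_le_rpow_of_nonpos hb₀0 hb hexp
          nlinarith [this]
  -- pointwise bound
  have hpt : ∀ ω, ENNReal.ofReal (f ω) ≤
      ∑' i, (S i).indicator (fun _ => ENNReal.ofReal (((i:ℝ)+2)*C)) ω := by
    intro ω
    by_cases h : C < Z ω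
    · obtain ⟨i, h1, h2⟩ := exists_layer (by linarith : (0:ℝ) < C) h
      have hmem : ω ∈ S i := h1
      refine le_trans ?_ (ENNReal.le_tsum i)
      rw [Set.indicator_of_mem hmem]
      apply ENNReal.ofReal_le_ofReal
      simp only [hf, if_pos h]
      exact h2
    · simp only [hf, if_neg h, ENNReal.ofReal_zero]
      exact zero_le
  have key : ∫⁻ ω, ENNReal.ofReal (f ω) ∂μ ≤
      ∑' i : ℕ, ENNReal.ofReal ((((i:ℝ)+2) * C) * ((1+ε₁) * b₀ ^ (1 - ((i:ℝ)+1)*C))) := by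
    calc ∫⁻ ω, ENNReal.ofReal (f ω) ∂μ
        ≤ ∫⁻ ω, ∑' i : ℕ, (S i).indicator (fun _ => ENNReal.ofReal (((i:ℝ)+2)*C)) ω ∂μ :=
          lintegral_mono hpt
      _ = ∑' i : ℕ, ∫⁻ ω, (S i).indicator (fun _ => ENNReal.ofReal (((i:ℝ)+2)*C)) ω ∂μ :=
          lintegral_tsum fun i => (measurable_const.indicator (hSmeas i)).aemeasurable
      _ = ∑' i : ℕ, ENNReal.ofReal (((i:ℝ)+2)*C) * μ (S i) := by
          refine tsum_congr fun i => ?_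
          rw [lintegral_indicator_const (hSmeas i)]
      _ ≤ ∑' i : ℕ, ENNReal.ofReal (((i:ℝ)+2)*C) * ENNReal.ofReal ((1+ε₁) * b₀ ^ (1 - ((i:ℝ)+1)*C)) :=
          ENNReal.tsum_le_tsum fun i => mul_le_mul_right (hμS i) _
      _ = ∑' i : ℕ, ENNReal.ofReal ((((i:ℝ)+2) * C) * ((1+ε₁) * b₀ ^ (1 - ((i:ℝ)+1)*C))) := by
          refine tsum_congr fun i => ?_
          rw [← ENNReal.ofReal_mul (by positivity)]
  -- summability of the real series
  have hr0 : (0:ℝ) ≤ b₀^(-C) := Real.rpow_nonneg hb₀0.le _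
  have hr1 : b₀^(-C) < 1 := Real.rpow_lt_one_of_one_lt_of_neg hb₀ (by linarith)
  have hsum : Summable (fun i : ℕ => (((i:ℝ)+2) * C) * ((1+ε₁) * b₀ ^ (1 - ((i:ℝ)+1)*C))) := by
    refine ((summable_geom2 hr0 hr1).mul_left (C * ((1+ε₁) * (b₀ * b₀^(-C))))).congr fun i => ?_
    rw [rpow_split hb₀0]
    ring
  have hnn' : ∀ i : ℕ, 0 ≤ (((i:ℝ)+2) * C) * ((1+ε₁) * b₀ ^ (1 - ((i:ℝ)+1)*C)) := by
    intro i
    have : (0:ℝ) ≤ b₀ ^ (1 - ((i:ℝ)+1)*C) := Real.rpow_nonneg hb₀0.le _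
    positivity
  rw [show (∫ ω, (if C < normLogMax X ξ γ N ω then normLogMax X ξ γ N ω else 0) ∂μ)
      = ∫ ω, f ω ∂μ from rfl]
  rw [integral_eq_lintegral_of_nonneg_ae (ae_of_all _ hfnn) hfmeas.aestronglyMeasurable]
  have key2 : ∫⁻ ω, ENNReal.ofReal (f ω) ∂μ ≤
      ENNReal.ofReal (∑' i : ℕ, (((i:ℝ)+2) * C) * ((1+ε₁) * b₀ ^ (1 - ((i:ℝ)+1)*C))) := by
    rw [ENNReal.ofReal_tsum_of_nonneg hnn' hsum]
    exact key
  calc (∫⁻ ω, ENNReal.ofReal (f ω) ∂μ).toReal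
      ≤ (ENNReal.ofReal (∑' i : ℕ, (((i:ℝ)+2) * C) * ((1+ε₁) * b₀ ^ (1 - ((i:ℝ)+1)*C)))).toReal :=
        ENNReal.toReal_mono ENNReal.ofReal_ne_top key2
    _ = ∑' i : ℕ, (((i:ℝ)+2) * C) * ((1+ε₁) * b₀ ^ (1 - ((i:ℝ)+1)*C)) :=
        ENNReal.toReal_ofReal (tsum_nonneg hnn')
    _ = ∑' i : ℕ, ((i:ℝ)+2) * C * ((1+ε₁) * b₀ ^ (1 - ((i:ℝ)+1)*C)) := rfl

lemma rpow_inv_eq {b C : ℝ} (hb : 0 < b) (i : ℕ) : (b ^ ((i:ℝ)*C))⁻¹ = (b^(-C))^i := by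
  have h1 : (b^(-C))^(i:ℕ) = b^((-C)*(i:ℝ)) := by
    rw [← Real.rpow_natCast (b^(-C)) i, ← Real.rpow_mul hb.le]
  rw [h1, ← Real.rpow_neg hb.le]
  congr 1; ring

lemma tsum_layer_bound {b C : ℝ} (hb : 1 < b) (hC : 1 ≤ C) :
    ∑' i : ℕ, (((i:ℝ)+2) * C * ((1+1) * b ^ (1 - ((i:ℝ)+1)*C)))
      ≤ 2*C*(b*b^(-C)) * ∑' i : ℕ, ((i:ℝ)+2) * (b⁻¹)^i := by
  have hb0 : (0:ℝ) < b := lt_trans one_pos hb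
  have hC0 : (0:ℝ) < C := lt_of_lt_of_le one_pos hC
  have hr0 : (0:ℝ) ≤ b^(-C) := Real.rpow_nonneg hb0.le _
  have hr1 : b^(-C) < 1 := Real.rpow_lt_one_of_one_lt_of_neg hb (by linarith)
  have hrle : b^(-C) ≤ b⁻¹ := by
    rw [← Real.rpow_neg_one b]
    exact Real.rpow_le_rpow_of_exponent_le hb.le (by linarith)
  have hi0 : (0:ℝ) ≤ b⁻¹ := by positivity
  have hi1 : b⁻¹ < 1 := by
    rw [inv_lt_one_iff₀]; right; exact hb
  calc ∑' i : ℕ, (((i:ℝ)+2) * C * ((1+1) * b ^ (1 - ((i:ℝ)+1)*C)))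
      = ∑' i : ℕ, (2*C*(b*b^(-C))) * (((i:ℝ)+2) * (b^(-C))^i) := by
        refine tsum_congr fun i => ?_
        rw [rpow_split hb0]; ring
    _ = (2*C*(b*b^(-C))) * ∑' i : ℕ, ((i:ℝ)+2) * (b^(-C))^i := tsum_mul_left
    _ ≤ (2*C*(b*b^(-C))) * ∑' i : ℕ, ((i:ℝ)+2) * (b⁻¹)^i := by
        apply mul_le_mul_of_nonneg_left _ (by positivity)
        refine Summable.tsum_le_tsum (fun i => ?_) (summable_geom2 hr0 hr1) (summable_geom2 hi0 hi1)
        have h := pow_le_pow_left₀ hr0 hrle i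
        have h2 : (0:ℝ) ≤ (i:ℝ)+2 := by positivity
        nlinarith [h]

lemma tendsto_term {b K : ℝ} (hb : 1 < b) :
    Tendsto (fun C : ℝ => 2*C*(b*b^(-C)) * K) atTop (𝓝 0) := by
  have h := (tendsto_mul_rpow_neg hb).const_mul (2*b*K)
  rw [mul_zero] at h
  refine h.congr fun C => ?_
  ring

lemma term_nonneg {b C T : ℝ} (hb : 0 < b) (hC : 0 ≤ C) (hT : 0 ≤ T) :
    0 ≤ 2*C*(b*b^(-C))*T := by
  have h6 : (0:ℝ) ≤ b^(-C) := Real.rpow_nonneg hb.le _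
  exact mul_nonneg (mul_nonneg (mul_nonneg (by norm_num) hC) (mul_nonneg hb.le h6)) hT

set_option maxHeartbeats 1000000 in
/-- Uniform integrability of the normalized truncated log-maximum for i.i.d.
Pareto-type tailed random variables, with an explicit truncation bound. -/
theorem normLogMax_uniformly_integrable
    {Ω : Type*} [MeasurableSpace Ω] (μ : Measure Ω) [IsProbabilityMeasure μ]
    (X : ℕ → Ω → ℝ) (hmeas : ∀ i, Measurable (X i)) (hnn : ∀ i ω, 0 ≤ X i ω)
    (hindep : iIndepFun X μ)
    (F : ℝ → ℝ) (hcdf : ∀ i x, (μ {ω | X i ω ≤ x}).toReal = F x)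
    (ξ γ : ℝ) (hξ : 0 < ξ) (hγ : 0 < γ)
    (htail : Tendsto (fun x => (1 - F x) / (ξ * x ^ (-γ))) atTop (𝓝 1)) :
    (∀ ε₁ > (0 : ℝ), ∀ ε₂ > (0 : ℝ), ∃ N₀ : ℕ, ∃ C₀ : ℝ, ∀ C ≥ C₀, ∀ N ≥ N₀,
      (∫ ω, (if C < normLogMax X ξ γ N ω then normLogMax X ξ γ N ω else 0) ∂μ) ≤
        C * (1 + ε₁) * (1 + ε₂) * (ξ * N₀) / (ξ * N₀) ^ C *
          ∑' i : ℕ, ((i : ℝ) + 2) / (ξ * N₀) ^ ((i : ℝ) * C)) ∧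
    Tendsto (fun C : ℝ =>
      ⨆ N : ℕ, ∫ ω, (if C < normLogMax X ξ γ N ω then normLogMax X ξ γ N ω else 0) ∂μ)
      atTop (𝓝 0) := by
  constructor
  · intro ε₁ hε₁ ε₂ hε₂
    have hev : ∀ᶠ x in atTop, (1 - F x)/(ξ * x^(-γ)) ≤ 1 + ε₁ :=
      htail.eventually (eventually_le_nhds (by linarith))
    obtain ⟨x₁, hx₁⟩ := eventually_atTop.mp hev
    set x₀ := max x₁ 1 with hx₀def
    have hx₀1 : (1:ℝ) ≤ x₀ := le_max_right _ _
    have htb : ∀ x, x₀ ≤ x → 1 - F x ≤ (1+ε₁) * (ξ * x ^ (-γ)) := by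
      intro x hx
      have hx1 : (1:ℝ) ≤ x := le_trans hx₀1 hx
      have hx0 : (0:ℝ) < x := by linarith
      have hpos : 0 < ξ * x^(-γ) := by positivity
      have h := hx₁ x (le_trans (le_max_left _ _) hx)
      rw [div_le_iff₀ hpos] at h
      linarith
    set N₀ : ℕ := ⌈Real.exp 1 / ξ⌉₊ + 1 with hN₀def
    have hb₀e : Real.exp 1 ≤ ξ * N₀ := by
      have h1 : Real.exp 1 / ξ ≤ (⌈Real.exp 1 / ξ⌉₊ : ℝ) := Nat.le_ceil _
      have h2 : (N₀:ℝ) = (⌈Real.exp 1 / ξ⌉₊ : ℝ) + 1 := by rw [hN₀def]; push_cast; ring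
      rw [h2]
      rw [div_le_iff₀ hξ] at h1
      nlinarith
    have hexp1 : (1:ℝ) < Real.exp 1 := by
      have := Real.add_one_le_exp 1; linarith
    have hb₀1 : (1:ℝ) < ξ * ↑N₀ := lt_of_lt_of_le hexp1 hb₀e
    have hb₀0 : (0:ℝ) < ξ * ↑N₀ := lt_trans one_pos hb₀1
    have hlogN₀ : 1 ≤ Real.log (ξ * ↑N₀) := by
      calc (1:ℝ) = Real.log (Real.exp 1) := (Real.log_exp 1).symm
        _ ≤ Real.log (ξ * ↑N₀) := Real.log_le_log (Real.exp_pos 1) hb₀e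
    refine ⟨N₀, max 1 (γ * Real.log x₀), ?_⟩
    intro C hc N hN
    have hC1 : 1 ≤ C := le_trans (le_max_left _ _) hc
    have hC0 : (0:ℝ) < C := lt_of_lt_of_le one_pos hC1
    have hb : ξ * ↑N₀ ≤ ξ * ↑N := by
      have : (N₀:ℝ) ≤ (N:ℝ) := by exact_mod_cast hN
      nlinarith
    have hbN0 : (0:ℝ) < ξ * ↑N := lt_of_lt_of_le hb₀0 hb
    have hlogN : 1 ≤ Real.log (ξ * ↑N) :=
      le_trans hlogN₀ (Real.log_le_log hb₀0 hb)
    have hth : x₀ ≤ Real.exp (C * ((1/γ) * Real.log (ξ * ↑N))) := by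
      have h2 : γ * Real.log x₀ ≤ C := le_trans (le_max_right _ _) hc
      have hlx : 0 ≤ Real.log x₀ := Real.log_nonneg hx₀1
      have key : γ * Real.log x₀ ≤ C * Real.log (ξ * ↑N) := by
        nlinarith [mul_nonneg hC0.le (by linarith : (0:ℝ) ≤ Real.log (ξ * ↑N) - 1)]
      have h1 : Real.log x₀ ≤ C * ((1/γ) * Real.log (ξ * ↑N)) := by
        rw [show C * ((1/γ) * Real.log (ξ * ↑N)) = (C * Real.log (ξ * ↑N))/γ from by ring,
          le_div_iff₀ hγ]
        linarith
      calc x₀ = Real.exp (Real.log x₀) := (Real.exp_log (by linarith)).symm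
        _ ≤ _ := Real.exp_le_exp.mpr h1
    have hcore := core_bound μ X hmeas F hcdf ξ γ hξ hγ ε₁ x₀ hε₁.le hx₀1 htb N
      (ξ * ↑N₀) hb₀1 hb C hC1 hth
    -- algebra
    set T : ℝ := ∑' i : ℕ, ((i:ℝ)+2) * ((ξ * ↑N₀)^(-C))^i with hTdef
    have hr0 : (0:ℝ) ≤ (ξ * ↑N₀)^(-C) := Real.rpow_nonneg hb₀0.le _
    have hT0 : 0 ≤ T := tsum_nonneg fun i => by positivity
    have hL : ∑' i : ℕ, (((i:ℝ)+2) * C * ((1+ε₁) * (ξ * ↑N₀) ^ (1 - ((i:ℝ)+1)*C)))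
        = (C*(1+ε₁)*((ξ * ↑N₀)*(ξ * ↑N₀)^(-C))) * T := by
      rw [hTdef, ← tsum_mul_left]
      refine tsum_congr fun i => ?_
      rw [rpow_split hb₀0]; ring
    have hR : ∑' i : ℕ, ((i:ℝ)+2) / ((ξ * ↑N₀) ^ ((i:ℝ)*C)) = T := by
      rw [hTdef]
      refine tsum_congr fun i => ?_
      rw [div_eq_mul_inv, rpow_inv_eq hb₀0]
    have hA0 : (0:ℝ) ≤ C*(1+ε₁)*((ξ * ↑N₀)*(ξ * ↑N₀)^(-C)) := by positivity
    calc (∫ ω, (if C < normLogMax X ξ γ N ω then normLogMax X ξ γ N ω else 0) ∂μ)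
        ≤ ∑' i : ℕ, (((i:ℝ)+2) * C * ((1+ε₁) * (ξ * ↑N₀) ^ (1 - ((i:ℝ)+1)*C))) := hcore
      _ = (C*(1+ε₁)*((ξ * ↑N₀)*(ξ * ↑N₀)^(-C))) * T := hL
      _ ≤ (1+ε₂) * ((C*(1+ε₁)*((ξ * ↑N₀)*(ξ * ↑N₀)^(-C))) * T) := by
          nlinarith [mul_nonneg hA0 hT0]
      _ = C * (1+ε₁) * (1+ε₂) * (ξ * ↑N₀) / (ξ * ↑N₀)^C * T := by
          rw [Real.rpow_neg hb₀0.le]; ring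
      _ = C * (1+ε₁) * (1+ε₂) * (ξ * ↑N₀) / (ξ * ↑N₀)^C *
            ∑' i : ℕ, ((i:ℝ)+2) / ((ξ * ↑N₀) ^ ((i:ℝ)*C)) := by rw [hR]
  · have hev : ∀ᶠ x in atTop, (1 - F x)/(ξ * x^(-γ)) ≤ 1 + 1 :=
      htail.eventually (eventually_le_nhds (by norm_num))
    obtain ⟨x₁, hx₁⟩ := eventually_atTop.mp hev
    set x₀ := max x₁ 1 with hx₀def
    have hx₀1 : (1:ℝ) ≤ x₀ := le_max_right _ _
    have htb : ∀ x, x₀ ≤ x → 1 - F x ≤ (1+1) * (ξ * x ^ (-γ)) := by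
      intro x hx
      have hx1 : (1:ℝ) ≤ x := le_trans hx₀1 hx
      have hx0 : (0:ℝ) < x := by linarith
      have hpos : 0 < ξ * x^(-γ) := by positivity
      have h := hx₁ x (le_trans (le_max_left _ _) hx)
      rw [div_le_iff₀ hpos] at h
      linarith
    set N₀ : ℕ := ⌈Real.exp 1 / ξ⌉₊ + 1 with hN₀def
    have hb₀e : Real.exp 1 ≤ ξ * N₀ := by
      have h1 : Real.exp 1 / ξ ≤ (⌈Real.exp 1 / ξ⌉₊ : ℝ) := Nat.le_ceil _
      have h2 : (N₀:ℝ) = (⌈Real.exp 1 / ξ⌉₊ : ℝ) + 1 := by rw [hN₀def]; push_cast; ring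
      rw [h2]
      rw [div_le_iff₀ hξ] at h1
      nlinarith
    have hexp1 : (1:ℝ) < Real.exp 1 := by
      have := Real.add_one_le_exp 1; linarith
    have hb₀1 : (1:ℝ) < ξ * ↑N₀ := lt_of_lt_of_le hexp1 hb₀e
    have hb₀0 : (0:ℝ) < ξ * ↑N₀ := lt_trans one_pos hb₀1
    have hlogN₀ : 1 ≤ Real.log (ξ * ↑N₀) := by
      calc (1:ℝ) = Real.log (Real.exp 1) := (Real.log_exp 1).symm
        _ ≤ Real.log (ξ * ↑N₀) := Real.log_le_log (Real.exp_pos 1) hb₀e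
    have hT0 : ∀ b : ℝ, 0 < b → (0:ℝ) ≤ ∑' i : ℕ, ((i:ℝ)+2) * (b⁻¹)^i := by
      intro b hbpos
      refine tsum_nonneg fun i => ?_
      have : (0:ℝ) ≤ b⁻¹ := by positivity
      positivity
    set g : ℝ → ℝ := fun C =>
      (∑ N ∈ Finset.range N₀, if 1 < ξ*(N:ℝ) then
          2*C*((ξ*(N:ℝ))*(ξ*(N:ℝ))^(-C)) * ∑' i : ℕ, ((i:ℝ)+2) * ((ξ*(N:ℝ))⁻¹)^i else 0)
        + 2*C*((ξ*(N₀:ℝ))*(ξ*(N₀:ℝ))^(-C)) * ∑' i : ℕ, ((i:ℝ)+2) * ((ξ*(N₀:ℝ))⁻¹)^i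
      with hgdef
    have hgt : Tendsto g atTop (𝓝 0) := by
      rw [hgdef]
      have h1 : Tendsto (fun C : ℝ => ∑ N ∈ Finset.range N₀, if 1 < ξ*(N:ℝ) then
          2*C*((ξ*(N:ℝ))*(ξ*(N:ℝ))^(-C)) * ∑' i : ℕ, ((i:ℝ)+2) * ((ξ*(N:ℝ))⁻¹)^i else 0)
          atTop (𝓝 0) := by
        have h2 : Tendsto (fun C : ℝ => ∑ N ∈ Finset.range N₀, if 1 < ξ*(N:ℝ) then
            2*C*((ξ*(N:ℝ))*(ξ*(N:ℝ))^(-C)) * ∑' i : ℕ, ((i:ℝ)+2) * ((ξ*(N:ℝ))⁻¹)^i else 0)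
            atTop (𝓝 (∑ N ∈ Finset.range N₀, (0:ℝ))) := by
          refine tendsto_finset_sum _ fun N _ => ?_
          by_cases hP : 1 < ξ*(N:ℝ)
          · simp only [if_pos hP]
            exact tendsto_term hP
          · simp only [if_neg hP]
            exact tendsto_const_nhds
        simpa using h2
      have h3 := h1.add (tendsto_term (K := ∑' i : ℕ, ((i:ℝ)+2) * ((ξ*(N₀:ℝ))⁻¹)^i) hb₀1)
      simpa using h3
    set D : ℝ := max (max 1 (γ * Real.log x₀))
      (∑ N ∈ Finset.range N₀, max 0 (γ * Real.log x₀ / Real.log (ξ*(N:ℝ)))) with hDdef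
    have hub : ∀ C : ℝ, D ≤ C → ∀ N : ℕ,
        (∫ ω, (if C < normLogMax X ξ γ N ω then normLogMax X ξ γ N ω else 0) ∂μ) ≤ g C := by
      intro C hDC N
      have hC1 : 1 ≤ C := le_trans (le_trans (le_max_left _ _) (le_max_left _ _)) hDC
      have hC0 : (0:ℝ) < C := lt_of_lt_of_le one_pos hC1
      have hγlx : γ * Real.log x₀ ≤ C :=
        le_trans (le_trans (le_max_right _ _) (le_max_left _ _)) hDC
      have hlx : 0 ≤ Real.log x₀ := Real.log_nonneg hx₀1
      -- nonnegativity of the sum part and the last term of g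
      have hsum_nonneg : (0:ℝ) ≤ ∑ N ∈ Finset.range N₀, if 1 < ξ*(N:ℝ) then
          2*C*((ξ*(N:ℝ))*(ξ*(N:ℝ))^(-C)) * ∑' i : ℕ, ((i:ℝ)+2) * ((ξ*(N:ℝ))⁻¹)^i else 0 := by
        refine Finset.sum_nonneg fun M _ => ?_
        by_cases hP : 1 < ξ*(M:ℝ)
        · rw [if_pos hP]
          exact term_nonneg (lt_trans one_pos hP) hC0.le (hT0 _ (lt_trans one_pos hP))
        · rw [if_neg hP]
      have hlast_nonneg : (0:ℝ) ≤
          2*C*((ξ*(N₀:ℝ))*(ξ*(N₀:ℝ))^(-C)) * ∑' i : ℕ, ((i:ℝ)+2) * ((ξ*(N₀:ℝ))⁻¹)^i :=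
        term_nonneg hb₀0 hC0.le (hT0 _ hb₀0)
      rcases le_or_gt N₀ N with hN | hN
      · -- large N : use base ξ N₀
        have hb : ξ * ↑N₀ ≤ ξ * ↑N := by
          have : (N₀:ℝ) ≤ (N:ℝ) := by exact_mod_cast hN
          nlinarith
        have hlogN : 1 ≤ Real.log (ξ * ↑N) :=
          le_trans hlogN₀ (Real.log_le_log hb₀0 hb)
        have hth : x₀ ≤ Real.exp (C * ((1/γ) * Real.log (ξ * ↑N))) := by
          have key : γ * Real.log x₀ ≤ C * Real.log (ξ * ↑N) := by
            nlinarith [mul_nonneg hC0.le (by linarith : (0:ℝ) ≤ Real.log (ξ * ↑N) - 1)]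
          have h1 : Real.log x₀ ≤ C * ((1/γ) * Real.log (ξ * ↑N)) := by
            rw [show C * ((1/γ) * Real.log (ξ * ↑N)) = (C * Real.log (ξ * ↑N))/γ from by ring,
              le_div_iff₀ hγ]
            linarith
          calc x₀ = Real.exp (Real.log x₀) := (Real.exp_log (by linarith)).symm
            _ ≤ _ := Real.exp_le_exp.mpr h1
        have hcore := core_bound μ X hmeas F hcdf ξ γ hξ hγ 1 x₀ (by norm_num) hx₀1 htb N
          (ξ * ↑N₀) hb₀1 hb C hC1 hth
        have hlayer := tsum_layer_bound hb₀1 hC1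
        simp only [hgdef]
        calc (∫ ω, (if C < normLogMax X ξ γ N ω then normLogMax X ξ γ N ω else 0) ∂μ)
            ≤ ∑' i : ℕ, (((i:ℝ)+2) * C * ((1+1) * (ξ * ↑N₀) ^ (1 - ((i:ℝ)+1)*C))) := hcore
          _ ≤ 2*C*((ξ*(N₀:ℝ))*(ξ*(N₀:ℝ))^(-C)) * ∑' i : ℕ, ((i:ℝ)+2) * ((ξ*(N₀:ℝ))⁻¹)^i :=
              hlayer
          _ ≤ _ := by linarith
      · -- small N
        by_cases hP : 1 < ξ*(N:ℝ)
        · -- use base ξ N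
          have hbN0 : (0:ℝ) < ξ*(N:ℝ) := lt_trans one_pos hP
          have hlogN : 0 < Real.log (ξ * ↑N) := Real.log_pos hP
          have hDN : γ * Real.log x₀ / Real.log (ξ*(N:ℝ)) ≤ C := by
            refine le_trans ?_ (le_trans (le_max_right _ _) hDC)
            refine le_trans (le_max_right 0 _) ?_
            refine Finset.single_le_sum (f := fun M : ℕ =>
              max 0 (γ * Real.log x₀ / Real.log (ξ*(M:ℝ)))) (fun M _ => le_max_left 0 _)
              (Finset.mem_range.mpr hN)
          have hth : x₀ ≤ Real.exp (C * ((1/γ) * Real.log (ξ * ↑N))) := by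
            have key : γ * Real.log x₀ ≤ C * Real.log (ξ * ↑N) := by
              rw [div_le_iff₀ hlogN] at hDN
              linarith
            have h1 : Real.log x₀ ≤ C * ((1/γ) * Real.log (ξ * ↑N)) := by
              rw [show C * ((1/γ) * Real.log (ξ * ↑N)) = (C * Real.log (ξ * ↑N))/γ from by ring,
                le_div_iff₀ hγ]
              linarith
            calc x₀ = Real.exp (Real.log x₀) := (Real.exp_log (by linarith)).symm
              _ ≤ _ := Real.exp_le_exp.mpr h1
          have hcore := core_bound μ X hmeas F hcdf ξ γ hξ hγ 1 x₀ (by norm_num) hx₀1 htb N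
            (ξ * ↑N) hP (le_refl _) C hC1 hth
          have hlayer := tsum_layer_bound hP hC1
          have hterm : (if 1 < ξ*(N:ℝ) then
              2*C*((ξ*(N:ℝ))*(ξ*(N:ℝ))^(-C)) * ∑' i : ℕ, ((i:ℝ)+2) * ((ξ*(N:ℝ))⁻¹)^i else 0)
              ≤ ∑ M ∈ Finset.range N₀, if 1 < ξ*(M:ℝ) then
              2*C*((ξ*(M:ℝ))*(ξ*(M:ℝ))^(-C)) * ∑' i : ℕ, ((i:ℝ)+2) * ((ξ*(M:ℝ))⁻¹)^i else 0 := by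
            refine Finset.single_le_sum (f := fun M : ℕ => if 1 < ξ*(M:ℝ) then
              2*C*((ξ*(M:ℝ))*(ξ*(M:ℝ))^(-C)) * ∑' i : ℕ, ((i:ℝ)+2) * ((ξ*(M:ℝ))⁻¹)^i else 0)
              (fun M _ => ?_) (Finset.mem_range.mpr hN)
            by_cases hQ : 1 < ξ*(M:ℝ)
            · rw [if_pos hQ]
              exact term_nonneg (lt_trans one_pos hQ) hC0.le (hT0 _ (lt_trans one_pos hQ))
            · rw [if_neg hQ]
          rw [if_pos hP] at hterm
          simp only [hgdef]
          calc (∫ ω, (if C < normLogMax X ξ γ N ω then normLogMax X ξ γ N ω else 0) ∂μ)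
              ≤ ∑' i : ℕ, (((i:ℝ)+2) * C * ((1+1) * (ξ * ↑N) ^ (1 - ((i:ℝ)+1)*C))) := hcore
            _ ≤ 2*C*((ξ*(N:ℝ))*(ξ*(N:ℝ))^(-C)) * ∑' i : ℕ, ((i:ℝ)+2) * ((ξ*(N:ℝ))⁻¹)^i :=
                hlayer
            _ ≤ _ := by linarith
        · -- ξ N ≤ 1 : integral is zero
          push_neg at hP
          have hzero : (fun ω => if C < normLogMax X ξ γ N ω then normLogMax X ξ γ N ω else 0)
              = fun _ => (0:ℝ) := by
            funext ω
            have hZle : normLogMax X ξ γ N ω ≤ 0 := by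
              unfold normLogMax
              split_ifs with h1
              · apply div_nonpos_of_nonneg_of_nonpos (Real.log_nonneg h1)
                apply mul_nonpos_of_nonneg_of_nonpos (by positivity)
                exact Real.log_nonpos (by positivity) hP
              · exact le_refl 0
            rw [if_neg (by linarith)]
          rw [hzero, integral_zero]
          simp only [hgdef]
          linarith
    have hupper : ∀ᶠ C in atTop,
        (⨆ N : ℕ, ∫ ω, (if C < normLogMax X ξ γ N ω then normLogMax X ξ γ N ω else 0) ∂μ)
          ≤ g C := by
      filter_upwards [eventually_ge_atTop D] with C hC
      exact ciSup_le (hub C hC)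
    have hlower : ∀ᶠ C in atTop, (0:ℝ) ≤
        (⨆ N : ℕ, ∫ ω, (if C < normLogMax X ξ γ N ω then normLogMax X ξ γ N ω else 0) ∂μ) := by
      filter_upwards [eventually_ge_atTop (1:ℝ)] with C hC
      refine Real.iSup_nonneg fun N => ?_
      refine integral_nonneg fun ω => ?_
      simp only [Pi.zero_apply]
      split_ifs with h
      · linarith
      · exact le_refl 0
    exact tendsto_of_tendsto_of_tendsto_of_le_of_le' tendsto_const_nhds hgt hlower hupper
end
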